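/- arXiv:1709.06878 — 3 statements merged into one kernel-verified Lean document; each statement's English description precedes it below -/
import Mathlib

section
/- Let η_l < η_r and let F : ℝ → ℝ be of class C³ and bistable between η_l and η_r. Let (η, c) be a Weertman profile with velocity c for the potential F. Then the limit lim_{R→+∞} ∫_{−R}^{R} F'(η(x)) dx exists and c = (1/(η_r − η_l)) · lim_{R→+∞} ∫_{−R}^{R} F'(η(x)) dx. -/
open MeasureTheory Filter Set

/-- The half-Laplacian `|∂x|` acting on a bounded C² function. -/
noncomputable def halfLap (u : ℝ → ℝ) (x : ℝ) : ℝ :=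
  -(1 / Real.pi) * ∫ y in Set.Ioi (0 : ℝ), (u (x + y) - 2 * u x + u (x - y)) / y ^ 2

section Aux

variable {η : ℝ → ℝ} {ηl ηr B : ℝ}

private lemma eta_ftc (hη : ContDiff ℝ 2 η) (a b : ℝ) :
    ∫ s in a..b, deriv η s = η b - η a :=
  intervalIntegral.integral_deriv_eq_sub
    (fun x _ => (hη.differentiable (by norm_num)).differentiableAt)
    ((hη.continuous_deriv one_le_two).intervalIntegrable a b)

private lemma eta_mono (hη' : ∀ x, 0 < deriv η x) : StrictMono η :=
  strictMono_of_deriv_pos hη'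

private lemma eta_le_top (hη' : ∀ x, 0 < deriv η x)
    (htop : Tendsto η atTop (nhds ηr)) : ∀ x, η x ≤ ηr := fun x =>
  ge_of_tendsto htop (eventually_atTop.2 ⟨x, fun _ hz => ((eta_mono hη').monotone hz)⟩)

private lemma eta_bot_le (hη' : ∀ x, 0 < deriv η x)
    (hbot : Tendsto η atBot (nhds ηl)) : ∀ x, ηl ≤ η x := fun x =>
  le_of_tendsto hbot (eventually_atBot.2 ⟨x, fun _ hz => ((eta_mono hη').monotone hz)⟩)

private lemma invsq_intervalIntegrable (Bc : ℝ) {a b : ℝ} (ha : 0 < a) (hab : a ≤ b) :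
    IntervalIntegrable (fun s => Bc / s ^ 2) volume a b := by
  apply ContinuousOn.intervalIntegrable
  apply ContinuousOn.div continuousOn_const (continuousOn_pow 2)
  intro s hs
  rw [Set.uIcc_of_le hab] at hs
  have : 0 < s := lt_of_lt_of_le ha hs.1
  positivity

private lemma invsq_integral (Bc : ℝ) {a b : ℝ} (ha : 0 < a) (hab : a ≤ b) :
    ∫ s in a..b, Bc / s ^ 2 = Bc / a - Bc / b := by
  have h : ∀ s ∈ Set.uIcc a b, HasDerivAt (fun t => -(Bc / t)) (Bc / s ^ 2) s := by
    intro s hs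
    rw [Set.uIcc_of_le hab] at hs
    have hs0 : s ≠ 0 := by have : 0 < s := lt_of_lt_of_le ha hs.1; positivity
    have := ((hasDerivAt_inv hs0).const_mul Bc).neg
    refine this.congr_deriv ?_
    ring
  rw [intervalIntegral.integral_eq_sub_of_hasDerivAt h
      (invsq_intervalIntegrable Bc ha hab)]
  ring

/-- Bound on increments over intervals to the right of 1. -/
private lemma incr_le (hη : ContDiff ℝ 2 η)
    (hB : ∀ s : ℝ, 1 ≤ |s| → deriv η s ≤ B / |s| ^ 2) (hB0 : 0 < B)
    {a b : ℝ} (ha : 1 ≤ a) (hab : a ≤ b) :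
    η b - η a ≤ B / a - B / b := by
  have ha0 : (0:ℝ) < a := lt_of_lt_of_le one_pos ha
  rw [← eta_ftc hη a b, ← invsq_integral B ha0 hab]
  apply intervalIntegral.integral_mono_on hab
    ((hη.continuous_deriv one_le_two).intervalIntegrable a b)
    (invsq_intervalIntegrable B ha0 hab)
  intro s hs
  have hs1 : 1 ≤ s := le_trans ha hs.1
  have := hB s (by rwa [abs_of_pos (lt_of_lt_of_le one_pos hs1)])
  rwa [abs_of_pos (lt_of_lt_of_le one_pos hs1)] at this

private lemma tail_top (hη : ContDiff ℝ 2 η) (hη' : ∀ x, 0 < deriv η x)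
    (htop : Tendsto η atTop (nhds ηr))
    (hB : ∀ s : ℝ, 1 ≤ |s| → deriv η s ≤ B / |s| ^ 2) (hB0 : 0 < B) :
    ∀ x : ℝ, 1 ≤ x → ηr - η x ≤ B / x := by
  intro x hx
  have hx0 : (0:ℝ) < x := lt_of_lt_of_le one_pos hx
  have key : ηr ≤ η x + B / x := by
    apply le_of_tendsto htop
    filter_upwards [eventually_ge_atTop x] with z hz
    have := incr_le hη hB hB0 hx hz
    have hBz : 0 ≤ B / z := le_of_lt (div_pos hB0 (lt_of_lt_of_le hx0 hz))
    linarith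
  linarith

private lemma tail_bot (hη : ContDiff ℝ 2 η) (hη' : ∀ x, 0 < deriv η x)
    (hbot : Tendsto η atBot (nhds ηl))
    (hB : ∀ s : ℝ, 1 ≤ |s| → deriv η s ≤ B / |s| ^ 2) (hB0 : 0 < B) :
    ∀ x : ℝ, 1 ≤ x → η (-x) - ηl ≤ B / x := by
  intro x hx
  have hx0 : (0:ℝ) < x := lt_of_lt_of_le one_pos hx
  have key : η (-x) - B / x ≤ ηl := by
    apply ge_of_tendsto hbot
    filter_upwards [eventually_le_atBot (-x)] with z hz
    -- η (-x) - η z = ∫_{z}^{-x} η' ≤ ∫ B/s², via reflection: use incr_le on mirrored fn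
    have hz' : x ≤ -z := by linarith
    have h2 : ∀ s : ℝ, 1 ≤ |s| → deriv (fun t => -η (-t)) s ≤ B / |s| ^ 2 := by
      intro s hs
      have : deriv (fun t => -η (-t)) s = deriv η (-s) := by
        rw [deriv.fun_neg, deriv_comp_neg, neg_neg]
      rw [this]
      have := hB (-s) (by rwa [abs_neg])
      rwa [abs_neg] at this
    have hcd : ContDiff ℝ 2 (fun t => -η (-t)) := (hη.comp (contDiff_neg)).neg
    have := incr_le hcd h2 hB0 hx hz'
    simp only [neg_neg] at this
    have hBz : 0 ≤ B / (-z) := le_of_lt (div_pos hB0 (lt_of_lt_of_le hx0 hz'))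
    linarith
  linarith

/-- The odd part used in the cancellation argument. -/
private def qq (η : ℝ → ℝ) (ηl ηr : ℝ) (s : ℝ) : ℝ := (ηr - η s) - (η (-s) - ηl)

/-- The second difference integrand after the inner integration. -/
private def dd (η : ℝ → ℝ) (R t : ℝ) : ℝ := η (R + t) - η (-R + t) - η (R - t) + η (-R - t)

private lemma qq_even (s : ℝ) : qq η ηl ηr (-s) = qq η ηl ηr s := by
  simp only [qq, neg_neg]; ring

private lemma qq_cont (hη : ContDiff ℝ 2 η) : Continuous (qq η ηl ηr) := by
  unfold qq
  exact (continuous_const.sub hη.continuous).sub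
    ((hη.continuous.comp continuous_neg).sub continuous_const)

private lemma dd_cont (hη : ContDiff ℝ 2 η) (R : ℝ) : Continuous (dd η R) := by
  unfold dd
  have h1 : Continuous fun t => η (R + t) := hη.continuous.comp (continuous_const.add continuous_id)
  have h2 : Continuous fun t => η (-R + t) := hη.continuous.comp (continuous_const.add continuous_id)
  have h3 : Continuous fun t => η (R - t) := hη.continuous.comp (continuous_const.sub continuous_id)
  have h4 : Continuous fun t => η (-R - t) := hη.continuous.comp (continuous_const.sub continuous_id)
  exact ((h1.sub h2).sub h3).add h4

private lemma dd_eq_qq (R t : ℝ) :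
    dd η R t = qq η ηl ηr (R - t) - qq η ηl ηr (R + t) := by
  unfold dd qq
  have e1 : -(R - t) = -R + t := by ring
  have e2 : -(R + t) = -R - t := by ring
  rw [e1, e2]; ring

private lemma qq_abs_le (hη' : ∀ x, 0 < deriv η x)
    (hbot : Tendsto η atBot (nhds ηl)) (htop : Tendsto η atTop (nhds ηr)) (s : ℝ) :
    |qq η ηl ηr s| ≤ ηr - ηl := by
  have h1 := eta_le_top hη' htop s
  have h2 := eta_bot_le hη' hbot s
  have h3 := eta_le_top hη' htop (-s)
  have h4 := eta_bot_le hη' hbot (-s)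
  rw [abs_le]; unfold qq; constructor <;> linarith

private lemma qq_tail (hη : ContDiff ℝ 2 η) (hη' : ∀ x, 0 < deriv η x)
    (hbot : Tendsto η atBot (nhds ηl)) (htop : Tendsto η atTop (nhds ηr))
    (hB : ∀ s : ℝ, 1 ≤ |s| → deriv η s ≤ B / |s| ^ 2) (hB0 : 0 < B)
    {s : ℝ} (hs : 1 ≤ s) :
    |qq η ηl ηr s| ≤ B / s := by
  have h1 := tail_top hη hη' htop hB hB0 s hs
  have h2 := tail_bot hη hη' hbot hB hB0 s hs
  have h3 := eta_le_top hη' htop s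
  have h4 := eta_bot_le hη' hbot (-s)
  rw [abs_le]; unfold qq; constructor <;> linarith

private lemma qq_tail_neg (hη : ContDiff ℝ 2 η) (hη' : ∀ x, 0 < deriv η x)
    (hbot : Tendsto η atBot (nhds ηl)) (htop : Tendsto η atTop (nhds ηr))
    (hB : ∀ s : ℝ, 1 ≤ |s| → deriv η s ≤ B / |s| ^ 2) (hB0 : 0 < B)
    {s : ℝ} (hs : s ≤ -1) :
    |qq η ηl ηr s| ≤ B / (-s) := by
  have := qq_tail hη hη' hbot htop hB hB0 (s := -s) (by linarith)
  rwa [qq_even] at this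

private lemma dd_bound1 (hη : ContDiff ℝ 2 η) (hη' : ∀ x, 0 < deriv η x)
    (hB : ∀ s : ℝ, 1 ≤ |s| → deriv η s ≤ B / |s| ^ 2) (hB0 : 0 < B)
    {R t : ℝ} (hR : 2 ≤ R) (ht : t ∈ Icc 0 (R/2)) :
    |dd η R t| ≤ 8*B*t/R^2 := by
  obtain ⟨ht0, htR⟩ := ht
  have hR0 : (0:ℝ) < R := by linarith
  have key : ∀ a : ℝ, R - t ≤ |a| → deriv η a ≤ 4*B/R^2 := by
    intro a ha
    have h1 : (1:ℝ) ≤ |a| := by linarith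
    have := hB a h1
    have h2 : (R/2)^2 ≤ |a|^2 := by nlinarith [abs_nonneg a]
    calc deriv η a ≤ B / |a|^2 := this
      _ ≤ B / (R/2)^2 := by
          apply div_le_div_of_nonneg_left hB0.le (by positivity) h2
      _ = 4*B/R^2 := by field_simp; ring
  have step : ∀ a b : ℝ, a ≤ b → b - a ≤ 2*t → (∀ s ∈ Icc a b, R - t ≤ |s|) →
      η b - η a ≤ 8*B*t/R^2 := by
    intro a b hab hlen hmem
    rw [← eta_ftc hη a b]
    calc (∫ s in a..b, deriv η s) ≤ ∫ _s in a..b, 4*B/R^2 := by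
          apply intervalIntegral.integral_mono_on hab
            ((hη.continuous_deriv one_le_two).intervalIntegrable a b)
            (intervalIntegrable_const)
          intro s hs
          exact key s (hmem s hs)
      _ = (b - a) * (4*B/R^2) := by
          rw [intervalIntegral.integral_const]; simp [smul_eq_mul]
      _ ≤ (2*t) * (4*B/R^2) := by
          apply mul_le_mul_of_nonneg_right hlen (by positivity)
      _ = 8*B*t/R^2 := by ring
  have h1 : η (R + t) - η (R - t) ≤ 8*B*t/R^2 := by
    apply step _ _ (by linarith) (by linarith)
    intro s hs
    rw [abs_of_pos (by cases hs; linarith)]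
    linarith [hs.1]
  have h2 : η (-R + t) - η (-R - t) ≤ 8*B*t/R^2 := by
    apply step _ _ (by linarith) (by linarith)
    intro s hs
    rw [abs_of_neg (by cases hs; linarith)]
    linarith [hs.2]
  have h1' : 0 ≤ η (R + t) - η (R - t) := by
    have := (eta_mono hη').monotone (show R - t ≤ R + t by linarith); linarith
  have h2' : 0 ≤ η (-R + t) - η (-R - t) := by
    have := (eta_mono hη').monotone (show -R - t ≤ -R + t by linarith); linarith
  have hb : (0:ℝ) ≤ 8*B*t/R^2 := by positivity
  rw [abs_le]; unfold dd; constructor <;> linarith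

private lemma dd_bound3 (hη : ContDiff ℝ 2 η) (hη' : ∀ x, 0 < deriv η x)
    (hbot : Tendsto η atBot (nhds ηl)) (htop : Tendsto η atTop (nhds ηr))
    (hB : ∀ s : ℝ, 1 ≤ |s| → deriv η s ≤ B / |s| ^ 2) (hB0 : 0 < B)
    {R t : ℝ} (hR : 2 ≤ R) (ht : 2*R ≤ t) :
    |dd η R t| ≤ 4*B/t := by
  have ht0 : (0:ℝ) < t := by linarith
  have h1 : |qq η ηl ηr (R - t)| ≤ B / (t - R) :=
    (by simpa using qq_tail_neg hη hη' hbot htop hB hB0 (s := R - t) (by linarith))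
  have h2 : |qq η ηl ηr (R + t)| ≤ B / (R + t) :=
    qq_tail hη hη' hbot htop hB hB0 (by linarith)
  have h3 : B / (t - R) ≤ 2*B/t := by
    rw [show 2*B/t = B/(t/2) by field_simp]
    exact div_le_div_of_nonneg_left hB0.le (by linarith) (by linarith)
  have h4 : B / (R + t) ≤ B/t :=
    div_le_div_of_nonneg_left hB0.le ht0 (by linarith)
  have h5 : (0:ℝ) ≤ B/t := by positivity
  calc |dd η R t| = |qq η ηl ηr (R - t) - qq η ηl ηr (R + t)| := by rw [dd_eq_qq]
    _ ≤ |qq η ηl ηr (R - t)| + |qq η ηl ηr (R + t)| := abs_sub _ _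
    _ ≤ 4*B/t := by
        have : (2*B/t) + (B/t) ≤ 4*B/t := by
          rw [← add_div, div_le_div_iff₀ ht0 ht0]; ring_nf; nlinarith
        linarith

private lemma hasDerivAt_negdiv (Bc : ℝ) {x : ℝ} (hx : x ≠ 0) :
    HasDerivAt (fun t => -(Bc / t)) (Bc / x ^ 2) x := by
  have := ((hasDerivAt_inv hx).const_mul Bc).neg
  refine this.congr_deriv ?_
  ring

private lemma invsq_Ioi {a : ℝ} (ha : 0 < a) (Bc : ℝ) (hBc : 0 ≤ Bc) :
    IntegrableOn (fun y => Bc / y ^ 2) (Ioi a) volume ∧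
      ∫ y in Ioi a, Bc / y ^ 2 = Bc / a := by
  have hderiv : ∀ x ∈ Ioi a, HasDerivAt (fun t => -(Bc / t)) (Bc / x ^ 2) x :=
    fun x hx => hasDerivAt_negdiv Bc (lt_trans ha hx).ne'
  have hcont : ContinuousWithinAt (fun t => -(Bc / t)) (Ici a) a :=
    (((continuousAt_const.div continuousAt_id ha.ne')).neg).continuousWithinAt
  have hnn : ∀ x ∈ Ioi a, 0 ≤ Bc / x ^ 2 := fun x hx => by positivity
  have hlim : Tendsto (fun t => -(Bc / t)) atTop (nhds 0) := by
    have : Tendsto (fun t : ℝ => Bc / t) atTop (nhds 0) :=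
      Tendsto.div_atTop tendsto_const_nhds tendsto_id
    simpa using this.neg
  refine ⟨integrableOn_Ioi_deriv_of_nonneg hcont hderiv hnn hlim, ?_⟩
  rw [integral_Ioi_of_hasDerivAt_of_nonneg hcont hderiv hnn hlim]
  ring

private lemma logdiv_Ioi {a : ℝ} (ha : 1 ≤ a) :
    IntegrableOn (fun y => Real.log y / y ^ 2) (Ioi a) volume ∧
      ∫ y in Ioi a, Real.log y / y ^ 2 = (Real.log a + 1) / a := by
  have ha0 : (0:ℝ) < a := by linarith
  have hderiv : ∀ x ∈ Ioi a, HasDerivAt (fun t => -((Real.log t + 1) / t))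
      (Real.log x / x ^ 2) x := by
    intro x hx
    have hx0 : (0:ℝ) < x := lt_trans ha0 hx
    have h1 := (((Real.hasDerivAt_log hx0.ne').add_const 1)).div (hasDerivAt_id x) hx0.ne'
    have h2 := h1.neg
    refine h2.congr_deriv ?_
    simp only [id_eq]
    field_simp
    ring
  have hcont : ContinuousWithinAt (fun t => -((Real.log t + 1) / t)) (Ici a) a := by
    apply ContinuousAt.continuousWithinAt
    exact (((Real.continuousAt_log ha0.ne').add continuousAt_const).div
      continuousAt_id ha0.ne').neg
  have hnn : ∀ x ∈ Ioi a, 0 ≤ Real.log x / x ^ 2 := fun x hx =>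
    div_nonneg (Real.log_nonneg (by have : a < x := hx; linarith)) (sq_nonneg x)
  have hlim : Tendsto (fun t => -((Real.log t + 1) / t)) atTop (nhds 0) := by
    have h1 : Tendsto (fun t : ℝ => Real.log t / t) atTop (nhds 0) :=
      Real.isLittleO_log_id_atTop.tendsto_div_nhds_zero
    have h2 : Tendsto (fun t : ℝ => 1 / t) atTop (nhds 0) :=
      Tendsto.div_atTop tendsto_const_nhds tendsto_id
    have h3 := (h1.add h2).neg
    simp only [add_zero, neg_zero] at h3
    apply h3.congr
    intro t; ring
  refine ⟨integrableOn_Ioi_deriv_of_nonneg hcont hderiv hnn hlim, ?_⟩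
  rw [integral_Ioi_of_hasDerivAt_of_nonneg hcont hderiv hnn hlim]
  ring

private lemma deriv_eta_cd (hη : ContDiff ℝ 2 η) : ContDiff ℝ 1 (deriv η) := by
  have : ContDiff ℝ (1+1 : ℕ) η := by exact_mod_cast hη
  exact (contDiff_succ_iff_deriv.mp this).2.2

private lemma secdiff_bound (hη : ContDiff ℝ 2 η) {R C : ℝ} (hR : 0 ≤ R)
    (hC : ∀ s ∈ Icc (-(R+1)) (R+1), |deriv (deriv η) s| ≤ C)
    {x y : ℝ} (hx : x ∈ Icc (-R) R) (hy : y ∈ Ioc (0:ℝ) 1) :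
    |η (x + y) - 2 * η x + η (x - y)| ≤ 2*C*y^2 := by
  obtain ⟨hx1, hx2⟩ := hx
  obtain ⟨hy0, hy1⟩ := hy
  have hdiff : Differentiable ℝ η := hη.differentiable (by norm_num)
  have hd1 : Differentiable ℝ (deriv η) := (deriv_eta_cd hη).differentiable one_ne_zero
  set w : ℝ → ℝ := fun s => η (x + s) + η (x - s) with hw
  have hwd : ∀ s : ℝ, DifferentiableAt ℝ w s := by
    intro s
    apply DifferentiableAt.add
    · exact (hdiff (x + s)).comp s ((differentiableAt_const x).add differentiableAt_id)
    · exact (hdiff (x - s)).comp s ((differentiableAt_const x).sub differentiableAt_id)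
  have hwderiv : ∀ s : ℝ, deriv w s = deriv η (x + s) - deriv η (x - s) := by
    intro s
    have d1 : DifferentiableAt ℝ (fun s : ℝ => η (x + s)) s :=
      (hdiff (x + s)).comp s ((differentiableAt_const x).add differentiableAt_id)
    have d2 : DifferentiableAt ℝ (fun s : ℝ => η (x - s)) s :=
      (hdiff (x - s)).comp s ((differentiableAt_const x).sub differentiableAt_id)
    rw [hw]
    rw [deriv_fun_add d1 d2, deriv_comp_const_add, deriv_comp_const_sub]
    ring
  -- Lipschitz bound for deriv η on the box
  have hlip : ∀ a b : ℝ, a ∈ Icc (-(R+1)) (R+1) → b ∈ Icc (-(R+1)) (R+1) →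
      |deriv η b - deriv η a| ≤ C * |b - a| := by
    intro a b ha hb
    have := Convex.norm_image_sub_le_of_norm_deriv_le (f := deriv η)
      (s := Icc (-(R+1)) (R+1)) (fun z _ => (hd1 z)) (fun z hz => by
        rw [Real.norm_eq_abs]; exact hC z hz) (convex_Icc _ _) ha hb
    simpa [Real.norm_eq_abs] using this
  -- deriv w bound on [0, y]
  have hC0 : 0 ≤ C := le_trans (abs_nonneg _) (hC 0 (by constructor <;> linarith))
  have hwbound : ∀ s ∈ Icc (0:ℝ) y, |deriv w s| ≤ 2*C*y := by
    intro s hs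
    obtain ⟨hs0, hsy⟩ := hs
    rw [hwderiv s]
    have h1 : x + s ∈ Icc (-(R+1)) (R+1) := by
      simp only [mem_Icc]; constructor <;> linarith
    have h2 : x - s ∈ Icc (-(R+1)) (R+1) := by
      simp only [mem_Icc]; constructor <;> linarith
    have := hlip (x - s) (x + s) h2 h1
    have he : |x + s - (x - s)| = 2*s := by rw [abs_of_nonneg (by linarith)]; ring
    rw [he] at this
    nlinarith
  have hfin := Convex.norm_image_sub_le_of_norm_deriv_le (f := w)
    (s := Icc (0:ℝ) y) (fun z _ => hwd z) (fun z hz => by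
      rw [Real.norm_eq_abs]; exact hwbound z hz) (convex_Icc _ _)
    (by constructor <;> linarith : (0:ℝ) ∈ Icc (0:ℝ) y)
    (by constructor <;> linarith : y ∈ Icc (0:ℝ) y)
  have : |w y - w 0| ≤ 2*C*y * y := by
    simpa [Real.norm_eq_abs, abs_of_nonneg hy0.le] using hfin
  have hgoal : η (x + y) - 2 * η x + η (x - y) = w y - w 0 := by
    simp [hw]; ring
  rw [hgoal]
  calc |w y - w 0| ≤ 2*C*y * y := this
    _ = 2*C*y^2 := by ring

private lemma inner_eq (hη : ContDiff ℝ 2 η) (R y : ℝ) :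
    (∫ x in (-R)..R, (η (x + y) - 2 * η x + η (x - y))) = ∫ t in (0:ℝ)..y, dd η R t := by
  have hc := hη.continuous
  have hi : ∀ a b : ℝ, IntervalIntegrable η volume a b := fun a b => hc.intervalIntegrable a b
  have key : ∀ a b : ℝ, (∫ x in a..b, η x) =
      (∫ x in (0:ℝ)..b, η x) - ∫ x in (0:ℝ)..a, η x := fun a b =>
    (intervalIntegral.integral_interval_sub_left (hi 0 b) (hi 0 a)).symm
  have I1 : IntervalIntegrable (fun x => η (x + y)) volume (-R) R :=
    (hc.comp (continuous_id.add continuous_const)).intervalIntegrable _ _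
  have I2 : IntervalIntegrable (fun x => 2 * η x) volume (-R) R :=
    (continuous_const.mul hc).intervalIntegrable _ _
  have I3 : IntervalIntegrable (fun x => η (x - y)) volume (-R) R :=
    (hc.comp (continuous_id.sub continuous_const)).intervalIntegrable _ _
  have J1 : IntervalIntegrable (fun t => η (R + t)) volume 0 y :=
    (hc.comp (continuous_const.add continuous_id)).intervalIntegrable _ _
  have J2 : IntervalIntegrable (fun t => η (-R + t)) volume 0 y :=
    (hc.comp (continuous_const.add continuous_id)).intervalIntegrable _ _
  have J3 : IntervalIntegrable (fun t => η (R - t)) volume 0 y :=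
    (hc.comp (continuous_const.sub continuous_id)).intervalIntegrable _ _
  have J4 : IntervalIntegrable (fun t => η (-R - t)) volume 0 y :=
    (hc.comp (continuous_const.sub continuous_id)).intervalIntegrable _ _
  have lhs : (∫ x in (-R)..R, (η (x + y) - 2 * η x + η (x - y)))
      = (∫ x in (-R)..R, η (x + y)) - (∫ x in (-R)..R, 2 * η x)
        + ∫ x in (-R)..R, η (x - y) := by
    rw [intervalIntegral.integral_add (I1.sub I2) I3, intervalIntegral.integral_sub I1 I2]
  have rhs : (∫ t in (0:ℝ)..y, dd η R t)
      = (∫ t in (0:ℝ)..y, η (R + t)) - (∫ t in (0:ℝ)..y, η (-R + t))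
        - (∫ t in (0:ℝ)..y, η (R - t)) + ∫ t in (0:ℝ)..y, η (-R - t) := by
    unfold dd
    rw [intervalIntegral.integral_add ((J1.sub J2).sub J3) J4,
      intervalIntegral.integral_sub (J1.sub J2) J3, intervalIntegral.integral_sub J1 J2]
  rw [lhs, rhs]
  rw [intervalIntegral.integral_comp_add_right (f := η) y,
    intervalIntegral.integral_comp_sub_right (f := η) y,
    intervalIntegral.integral_const_mul,
    intervalIntegral.integral_comp_add_left (f := η) R,
    intervalIntegral.integral_comp_add_left (f := η) (-R),
    intervalIntegral.integral_comp_sub_left (f := η) R,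
    intervalIntegral.integral_comp_sub_left (f := η) (-R)]
  simp only [add_zero, sub_zero]
  rw [key (-R + y) (R + y), key (-R) R, key (-R - y) (R - y), key R (R + y),
    key (-R) (-R + y), key (R - y) R, key (-R - y) (-R)]
  ring

private lemma eta_abs_le (hη' : ∀ x, 0 < deriv η x)
    (hbot : Tendsto η atBot (nhds ηl)) (htop : Tendsto η atTop (nhds ηr)) (z : ℝ) :
    |η z| ≤ max |ηl| |ηr| := by
  have h1 := eta_le_top hη' htop z
  have h2 := eta_bot_le hη' hbot z
  have h3 : -(max |ηl| |ηr|) ≤ ηl := by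
    have ha := neg_abs_le ηl
    have hb := le_max_left |ηl| |ηr|
    linarith
  have h4 : ηr ≤ max |ηl| |ηr| := le_trans (le_abs_self _) (le_max_right _ _)
  rw [abs_le]; constructor <;> linarith

private lemma prod_integrable (hη : ContDiff ℝ 2 η) (hη' : ∀ x, 0 < deriv η x)
    (hbot : Tendsto η atBot (nhds ηl)) (htop : Tendsto η atTop (nhds ηr))
    {R : ℝ} (hR : 0 < R) :
    Integrable (fun p : ℝ × ℝ => (η (p.1 + p.2) - 2 * η p.1 + η (p.1 - p.2)) / p.2 ^ 2)
      ((volume.restrict (Ioc (-R) R)).prod (volume.restrict (Ioi 0))) := by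
  have hc := hη.continuous
  have hcont'' : Continuous (deriv (deriv η)) := (deriv_eta_cd hη).continuous_deriv le_rfl
  obtain ⟨C, hC⟩ : ∃ C, ∀ s ∈ Icc (-(R+1)) (R+1), |deriv (deriv η) s| ≤ C := by
    obtain ⟨C, hC⟩ := isCompact_Icc.exists_bound_of_continuousOn
      (s := Icc (-(R+1)) (R+1)) hcont''.continuousOn
    exact ⟨C, fun s hs => by have := hC s hs; rwa [Real.norm_eq_abs] at this⟩
  have hC0 : 0 ≤ C := le_trans (abs_nonneg _) (hC 0 (by simp only [mem_Icc]; constructor <;> linarith))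
  set M := max |ηl| |ηr| with hM
  have habs : ∀ z, |η z| ≤ M := eta_abs_le hη' hbot htop
  have hM0 : 0 ≤ M := le_trans (abs_nonneg _) (le_max_left _ _)
  set bnd : ℝ → ℝ := fun y => if y ≤ 1 then 2*C else 4*M/y^2 with hbnd
  -- integrability of the bound on (0, ∞)
  have hbnd_int : IntegrableOn bnd (Ioi 0) volume := by
    have hsplit : Ioc (0:ℝ) 1 ∪ Ioi 1 = Ioi 0 := Ioc_union_Ioi_eq_Ioi zero_le_one
    rw [← hsplit]
    apply IntegrableOn.union
    · apply (integrableOn_const (C := 2*C) measure_Ioc_lt_top.ne).congr_fun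
        (fun y hy => ?_) measurableSet_Ioc
      rw [hbnd]; simp only [if_pos hy.2]
    · apply (invsq_Ioi one_pos (4*M) (by positivity)).1.congr_fun
        (fun y hy => ?_) measurableSet_Ioi
      rw [hbnd]; simp only [if_neg (not_le.2 (mem_Ioi.1 hy))]
  have hbnd_meas : Measurable bnd := by
    apply Measurable.ite (measurableSet_le measurable_id measurable_const)
      measurable_const
    exact measurable_const.div (measurable_id.pow_const 2)
  have hnum_cont : Continuous fun p : ℝ × ℝ => η (p.1 + p.2) - 2 * η p.1 + η (p.1 - p.2) :=
    ((hc.comp (continuous_fst.add continuous_snd)).sub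
      (continuous_const.mul (hc.comp continuous_fst))).add
      (hc.comp (continuous_fst.sub continuous_snd))
  constructor
  · apply Measurable.aestronglyMeasurable
    exact hnum_cont.measurable.div (measurable_snd.pow_const 2)
  · -- finite integral via the bound
    apply MeasureTheory.HasFiniteIntegral.mono' (g := fun p => bnd p.2)
    · -- HasFiniteIntegral of p ↦ bnd p.2
      rw [MeasureTheory.hasFiniteIntegral_iff_norm]
      calc (∫⁻ p : ℝ × ℝ, ENNReal.ofReal ‖bnd p.2‖
            ∂((volume.restrict (Ioc (-R) R)).prod (volume.restrict (Ioi 0))))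
          = ∫⁻ _x : ℝ, (∫⁻ y : ℝ, ENNReal.ofReal ‖bnd y‖ ∂(volume.restrict (Ioi 0)))
            ∂(volume.restrict (Ioc (-R) R)) := by
            apply MeasureTheory.lintegral_prod
            exact ((ENNReal.measurable_ofReal.comp (hbnd_meas.norm)).comp measurable_snd).aemeasurable
        _ = (volume.restrict (Ioc (-R) R)) univ * ∫⁻ y : ℝ, ENNReal.ofReal ‖bnd y‖ ∂(volume.restrict (Ioi 0)) := by
            rw [MeasureTheory.lintegral_const]; ring
        _ < ⊤ := by
            apply ENNReal.mul_lt_top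
            · rw [Measure.restrict_apply_univ]; exact measure_Ioc_lt_top
            · rw [← MeasureTheory.hasFiniteIntegral_iff_norm]
              exact hbnd_int.2
    · -- pointwise bound
      rw [Measure.prod_restrict]
      filter_upwards [MeasureTheory.ae_restrict_mem (measurableSet_Ioc.prod measurableSet_Ioi)]
        with p hp
      obtain ⟨hp1, hp2⟩ := hp
      have hy0 : (0:ℝ) < p.2 := hp2
      rw [Real.norm_eq_abs, abs_div, abs_of_pos (by positivity : (0:ℝ) < p.2 ^ 2)]
      by_cases hy1 : p.2 ≤ 1
      · have hb : bnd p.2 = 2*C := by rw [hbnd]; simp only [if_pos hy1]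
        rw [hb, div_le_iff₀ (by positivity)]
        have hx : p.1 ∈ Icc (-R) R := Ioc_subset_Icc_self hp1
        have := secdiff_bound hη hR.le hC hx ⟨hy0, hy1⟩
        nlinarith [sq_nonneg p.2, this]
      · have hb : bnd p.2 = 4*M/p.2^2 := by rw [hbnd]; simp only [if_neg hy1]
        rw [hb]
        apply div_le_div_of_nonneg_right ?_ (by positivity)
        have h1 := habs (p.1 + p.2)
        have h2 := habs p.1
        have h3 := habs (p.1 - p.2)
        calc |η (p.1 + p.2) - 2 * η p.1 + η (p.1 - p.2)|
            ≤ |η (p.1 + p.2)| + 2*|η p.1| + |η (p.1 - p.2)| := by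
              have := abs_add_le (η (p.1 + p.2) - 2 * η p.1) (η (p.1 - p.2))
              have := abs_sub (η (p.1 + p.2)) (2 * η p.1)
              have := abs_mul 2 (η p.1)
              simp only [abs_two] at *
              linarith [abs_sub (η (p.1 + p.2)) (2 * η p.1)]
          _ ≤ 4*M := by linarith

set_option maxHeartbeats 1600000 in
private lemma core_bound (hlr : ηl < ηr) (hB0 : 0 < B)
    (hη : ContDiff ℝ 2 η) (hη' : ∀ x, 0 < deriv η x)
    (hbot : Tendsto η atBot (nhds ηl)) (htop : Tendsto η atTop (nhds ηr))
    (hB : ∀ s : ℝ, 1 ≤ |s| → deriv η s ≤ B / |s| ^ 2)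
    {R : ℝ} (hR : 2 ≤ R) :
    |∫ x in (-R)..R, halfLap η x| ≤ (20*B + 8*(ηr - ηl) + 10*B*Real.log R)/R := by
  have hR0 : (0:ℝ) < R := by linarith
  have hlogR : 0 ≤ Real.log R := Real.log_nonneg (by linarith)
  set Lc := 3*B + (2*(ηr - ηl) + 2*B*Real.log R) with hLc
  have hLc0 : 0 ≤ Lc := by
    have h1 : 0 ≤ 2*B*Real.log R := by positivity
    rw [hLc]; nlinarith
  set f : ℝ × ℝ → ℝ := fun p => (η (p.1 + p.2) - 2 * η p.1 + η (p.1 - p.2)) / p.2 ^ 2 with hf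
  have hint : Integrable f
      ((volume.restrict (Ioc (-R) R)).prod (volume.restrict (Ioi 0))) :=
    prod_integrable hη hη' hbot htop (by linarith)
  set Hf : ℝ → ℝ := fun y => ∫ x in Ioc (-R) R, f (x, y) with hHf
  -- Fubini
  have hswap : ∫ x in (-R)..R, halfLap η x = -(1/Real.pi) * ∫ y in Ioi (0:ℝ), Hf y := by
    rw [intervalIntegral.integral_of_le (by linarith : -R ≤ R)]
    unfold halfLap
    rw [MeasureTheory.integral_const_mul]
    congr 1
    have huncurry : Function.uncurry (fun x y => f (x, y)) = f := rfl
    have hswap2 := MeasureTheory.integral_integral_swap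
      (μ := volume.restrict (Ioc (-R) R)) (ν := volume.restrict (Ioi (0:ℝ)))
      (f := fun x y => f (x, y)) (by rw [huncurry]; exact hint)
    exact hswap2
  -- basic integrability facts
  have hHf_int : IntegrableOn Hf (Ioi 0) volume := hint.integral_prod_right
  have hdd_int : ∀ a b : ℝ, IntervalIntegrable (dd η R) volume a b :=
    fun a b => (dd_cont hη R).intervalIntegrable a b
  have habsdd_int : ∀ a b : ℝ, IntervalIntegrable (fun t => |dd η R t|) volume a b :=
    fun a b => ((dd_cont hη R).abs).intervalIntegrable a b
  have hHq : ∀ y : ℝ, 0 < y → Hf y = (∫ t in (0:ℝ)..y, dd η R t)/y^2 := by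
    intro y hy
    show (∫ x in Ioc (-R) R, f (x, y)) = _
    rw [← intervalIntegral.integral_of_le (by linarith : -R ≤ R)]
    simp only [hf]
    rw [intervalIntegral.integral_div, inner_eq hη]
  -- Region 1 estimate
  have hbase : ∀ y : ℝ, 0 ≤ y → y ≤ R/2 → |∫ t in (0:ℝ)..y, dd η R t| ≤ 4*B/R^2 * y^2 := by
    intro y hy0 hyR
    calc |∫ t in (0:ℝ)..y, dd η R t| ≤ ∫ t in (0:ℝ)..y, |dd η R t| := by
          have := intervalIntegral.norm_integral_le_integral_norm
            (f := dd η R) (a := 0) (b := y) (μ := volume) hy0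
          simpa [Real.norm_eq_abs] using this
      _ ≤ ∫ t in (0:ℝ)..y, 8*B/R^2 * t := by
          apply intervalIntegral.integral_mono_on hy0 (habsdd_int 0 y)
            ((continuous_const.mul continuous_id).intervalIntegrable 0 y)
          intro t ht
          have hd := dd_bound1 hη hη' hB hB0 hR ⟨ht.1, le_trans ht.2 hyR⟩
          calc |dd η R t| ≤ 8*B*t/R^2 := hd
            _ = 8*B/R^2 * t := by ring
      _ = 4*B/R^2 * y^2 := by
          rw [intervalIntegral.integral_const_mul, integral_id]; ring
  -- Q bound
  have hQcont : Continuous fun s => |qq η ηl ηr s| := (qq_cont hη).abs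
  have hQint : ∀ a b : ℝ, IntervalIntegrable (fun s => |qq η ηl ηr s|) volume a b :=
    fun a b => hQcont.intervalIntegrable a b
  have hQ : (∫ s in (-R)..(R/2), |qq η ηl ηr s|) ≤ 2*(ηr - ηl) + 2*B*Real.log R := by
    have A1 := intervalIntegral.integral_add_adjacent_intervals
      (hQint (-R) (-1)) (hQint (-1) (R/2))
    have A2 := intervalIntegral.integral_add_adjacent_intervals
      (hQint (-1) 1) (hQint 1 (R/2))
    have b1 : (∫ s in (-R)..(-1:ℝ), |qq η ηl ηr s|) ≤ B * Real.log R := by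
      have hmono : (∫ s in (-R)..(-1:ℝ), |qq η ηl ηr s|) ≤ ∫ s in (-R)..(-1:ℝ), B/(-s) := by
        apply intervalIntegral.integral_mono_on (by linarith) (hQint _ _)
        · apply ContinuousOn.intervalIntegrable
          apply continuousOn_const.div continuousOn_id.neg
          intro s hs
          rw [Set.uIcc_of_le (by linarith : -R ≤ (-1:ℝ))] at hs
          have := hs.2
          intro h0; simp at h0; linarith
        · intro s hs
          exact qq_tail_neg hη hη' hbot htop hB hB0 hs.2
      have hcn : (∫ s in (-R)..(-1:ℝ), B/(-s)) = ∫ s in (1:ℝ)..R, B/s := by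
        have := intervalIntegral.integral_comp_neg (a := -R) (b := (-1:ℝ)) (f := fun s => B/s)
        simpa using this
      have hval : (∫ s in (1:ℝ)..R, B/s) = B * Real.log R := by
        have h1 : (∫ s in (1:ℝ)..R, B/s) = ∫ s in (1:ℝ)..R, B * (1/s) := by
          congr 1; funext s; ring
        rw [h1, intervalIntegral.integral_const_mul, integral_one_div]
        · norm_num
        · intro h
          rw [Set.uIcc_of_le (by linarith : (1:ℝ) ≤ R)] at h
          have := h.1; linarith
      linarith [hmono, hcn.le, hcn.ge, hval.le]
    have b2 : (∫ s in (-1:ℝ)..1, |qq η ηl ηr s|) ≤ 2*(ηr - ηl) := by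
      calc (∫ s in (-1:ℝ)..1, |qq η ηl ηr s|) ≤ ∫ _s in (-1:ℝ)..1, (ηr - ηl) := by
            apply intervalIntegral.integral_mono_on (by norm_num) (hQint _ _)
              intervalIntegrable_const
            intro s _
            exact qq_abs_le hη' hbot htop s
        _ = 2*(ηr - ηl) := by rw [intervalIntegral.integral_const, smul_eq_mul]; ring
    have b3 : (∫ s in (1:ℝ)..(R/2), |qq η ηl ηr s|) ≤ B * Real.log R := by
      have hmono : (∫ s in (1:ℝ)..(R/2), |qq η ηl ηr s|) ≤ ∫ s in (1:ℝ)..(R/2), B/s := by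
        apply intervalIntegral.integral_mono_on (by linarith) (hQint _ _)
        · apply ContinuousOn.intervalIntegrable
          apply continuousOn_const.div continuousOn_id
          intro s hs
          rw [Set.uIcc_of_le (by linarith : (1:ℝ) ≤ R/2)] at hs
          have := hs.1; intro h0; simp only [id_eq] at h0; linarith
        · intro s hs
          exact qq_tail hη hη' hbot htop hB hB0 hs.1
      have hval : (∫ s in (1:ℝ)..(R/2), B/s) = B * Real.log (R/2) := by
        have h1 : (∫ s in (1:ℝ)..(R/2), B/s) = ∫ s in (1:ℝ)..(R/2), B * (1/s) := by
          congr 1; funext s; ring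
        rw [h1, intervalIntegral.integral_const_mul, integral_one_div]
        · norm_num
        · intro h
          rw [Set.uIcc_of_le (by linarith : (1:ℝ) ≤ R/2)] at h
          have := h.1; linarith
      have hle : B * Real.log (R/2) ≤ B * Real.log R := by
        apply mul_le_mul_of_nonneg_left _ hB0.le
        apply Real.log_le_log (by linarith)
        linarith
      linarith
    linarith
  -- Region 2 estimate
  have hmid : ∀ y : ℝ, R/2 ≤ y → y ≤ 2*R → |∫ t in (0:ℝ)..y, dd η R t| ≤ Lc := by
    intro y hy1 hy2
    have hsplit := intervalIntegral.integral_add_adjacent_intervals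
      (hdd_int 0 (R/2)) (hdd_int (R/2) y)
    have p1 : |∫ t in (0:ℝ)..(R/2), dd η R t| ≤ B := by
      have h1 := hbase (R/2) (by linarith) le_rfl
      have h2 : 4*B/R^2 * (R/2)^2 = B := by field_simp; ring
      linarith
    have p2 : |∫ t in (R/2)..y, dd η R t| ≤
        (∫ s in (-R)..(R/2), |qq η ηl ηr s|) + 2*B := by
      have step1 : |∫ t in (R/2)..y, dd η R t| ≤ ∫ t in (R/2)..y, |dd η R t| := by
        have := intervalIntegral.norm_integral_le_integral_norm
          (f := dd η R) (a := R/2) (b := y) (μ := volume) hy1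
        simpa [Real.norm_eq_abs] using this
      have hqcompC : Continuous fun t : ℝ => |qq η ηl ηr (R - t)| :=
        hQcont.comp (continuous_const.sub continuous_id)
      have step2 : (∫ t in (R/2)..y, |dd η R t|) ≤
          ∫ t in (R/2)..y, (|qq η ηl ηr (R - t)| + B/R) := by
        apply intervalIntegral.integral_mono_on hy1 (habsdd_int _ _)
          ((hqcompC.add continuous_const).intervalIntegrable _ _)
        intro t ht
        show |dd η R t| ≤ |qq η ηl ηr (R - t)| + B/R
        have h1 : |qq η ηl ηr (R + t)| ≤ B/(R + t) :=
          qq_tail hη hη' hbot htop hB hB0 (by linarith [ht.1])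
        have h2 : B/(R + t) ≤ B/R :=
          div_le_div_of_nonneg_left hB0.le hR0 (by linarith [ht.1])
        have h3 : |dd η R t| ≤ |qq η ηl ηr (R - t)| + |qq η ηl ηr (R + t)| := by
          rw [dd_eq_qq]; exact abs_sub _ _
        linarith
      have step3 : (∫ t in (R/2)..y, (|qq η ηl ηr (R - t)| + B/R))
          = (∫ t in (R/2)..y, |qq η ηl ηr (R - t)|) + (y - R/2) * (B/R) := by
        rw [intervalIntegral.integral_add (hqcompC.intervalIntegrable _ _)
          (intervalIntegrable_const), intervalIntegral.integral_const, smul_eq_mul]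
      have step4 : (∫ t in (R/2)..y, |qq η ηl ηr (R - t)|)
          ≤ ∫ s in (-R)..(R/2), |qq η ηl ηr s| := by
        have hsub := intervalIntegral.integral_comp_sub_left
          (a := R/2) (b := y) (fun s => |qq η ηl ηr s|) R
        have hhalf : R - R/2 = R/2 := by ring
        rw [hhalf] at hsub
        rw [hsub]
        have hext := intervalIntegral.integral_add_adjacent_intervals
          (hQint (-R) (R - y)) (hQint (R - y) (R/2))
        have hnn : 0 ≤ ∫ s in (-R)..(R - y), |qq η ηl ηr s| :=
          intervalIntegral.integral_nonneg (by linarith) (fun _ _ => abs_nonneg _)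
        linarith
      have step5 : (y - R/2) * (B/R) ≤ 2*B := by
        have h1 : y - R/2 ≤ 2*R := by linarith
        have h2 : (2*R) * (B/R) = 2*B := by field_simp
        have := mul_le_mul_of_nonneg_right h1 (le_of_lt (div_pos hB0 hR0))
        linarith
      linarith
    have habs2 : |∫ t in (0:ℝ)..y, dd η R t| ≤
        |∫ t in (0:ℝ)..(R/2), dd η R t| + |∫ t in (R/2)..y, dd η R t| := by
      rw [← hsplit]; exact abs_add_le _ _
    rw [hLc]; linarith
  -- Region 3 estimate
  have htail : ∀ y : ℝ, 2*R ≤ y → |∫ t in (0:ℝ)..y, dd η R t| ≤ Lc + 4*B*Real.log y := by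
    intro y hy
    have hsplit := intervalIntegral.integral_add_adjacent_intervals
      (hdd_int 0 (2*R)) (hdd_int (2*R) y)
    have p1 : |∫ t in (0:ℝ)..(2*R), dd η R t| ≤ Lc := hmid (2*R) (by linarith) le_rfl
    have p2 : |∫ t in (2*R)..y, dd η R t| ≤ 4*B*Real.log y := by
      have step1 : |∫ t in (2*R)..y, dd η R t| ≤ ∫ t in (2*R)..y, |dd η R t| := by
        have := intervalIntegral.norm_integral_le_integral_norm
          (f := dd η R) (a := 2*R) (b := y) (μ := volume) hy
        simpa [Real.norm_eq_abs] using this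
      have step2 : (∫ t in (2*R)..y, |dd η R t|) ≤ ∫ t in (2*R)..y, 4*B*(1/t) := by
        apply intervalIntegral.integral_mono_on hy (habsdd_int _ _)
        · apply ContinuousOn.intervalIntegrable
          apply continuousOn_const.mul
          apply continuousOn_const.div continuousOn_id
          intro t ht
          rw [Set.uIcc_of_le hy] at ht
          have := ht.1; intro h0; simp only [id_eq] at h0; linarith
        · intro t ht
          have := dd_bound3 hη hη' hbot htop hB hB0 hR ht.1
          calc |dd η R t| ≤ 4*B/t := this
            _ = 4*B*(1/t) := by ring
      have step3 : (∫ t in (2*R)..y, 4*B*(1/t)) = 4*B*Real.log (y/(2*R)) := by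
        rw [intervalIntegral.integral_const_mul, integral_one_div]
        intro h
        rw [Set.uIcc_of_le hy] at h
        have := h.1; linarith
      have step4 : Real.log (y/(2*R)) ≤ Real.log y := by
        apply Real.log_le_log (div_pos (by linarith) (by linarith))
        apply div_le_self (by linarith) (by linarith)
      have : 4*B*Real.log (y/(2*R)) ≤ 4*B*Real.log y :=
        mul_le_mul_of_nonneg_left step4 (by positivity)
      linarith
    have habs3 : |∫ t in (0:ℝ)..y, dd η R t| ≤
        |∫ t in (0:ℝ)..(2*R), dd η R t| + |∫ t in (2*R)..y, dd η R t| := by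
      rw [← hsplit]; exact abs_add_le _ _
    linarith
  -- split set integral
  have h1u : Ioc (0:ℝ) (R/2) ∪ Ioi (R/2) = Ioi 0 := Ioc_union_Ioi_eq_Ioi (by linarith)
  have h2u : Ioc (R/2) (2*R) ∪ Ioi (2*R) = Ioi (R/2) := Ioc_union_Ioi_eq_Ioi (by linarith)
  have hsub1 : Ioc (0:ℝ) (R/2) ⊆ Ioi 0 := fun z hz => hz.1
  have hsub2 : Ioc (R/2) (2*R) ⊆ Ioi 0 := fun z hz => by
    have := hz.1; exact mem_Ioi.2 (by linarith [this])
  have hsub2' : Ioi (R/2) ⊆ Ioi 0 := fun z hz => mem_Ioi.2 (by linarith [mem_Ioi.1 hz])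
  have hsub3 : Ioi (2*R) ⊆ Ioi 0 := fun z hz => mem_Ioi.2 (by linarith [mem_Ioi.1 hz])
  have hsplitset : (∫ y in Ioi (0:ℝ), Hf y) = (∫ y in Ioc 0 (R/2), Hf y)
      + ((∫ y in Ioc (R/2) (2*R), Hf y) + ∫ y in Ioi (2*R), Hf y) := by
    rw [← h1u, MeasureTheory.setIntegral_union Ioc_disjoint_Ioi_same measurableSet_Ioi
      (hHf_int.mono_set hsub1) (hHf_int.mono_set hsub2'), ← h2u,
      MeasureTheory.setIntegral_union Ioc_disjoint_Ioi_same measurableSet_Ioi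
      (hHf_int.mono_set hsub2) (hHf_int.mono_set hsub3)]
  -- region 1 integral bound
  have r1 : |∫ y in Ioc (0:ℝ) (R/2), Hf y| ≤ 2*B/R := by
    have hb : ∀ y ∈ Ioc (0:ℝ) (R/2), |Hf y| ≤ 4*B/R^2 := by
      intro y hy
      have hy0 : (0:ℝ) < y := hy.1
      rw [hHq y hy.1, abs_div, abs_of_pos (pow_pos hy0 2),
        div_le_iff₀ (pow_pos hy0 2)]
      exact hbase y hy.1.le hy.2
    calc |∫ y in Ioc (0:ℝ) (R/2), Hf y| ≤ ∫ y in Ioc (0:ℝ) (R/2), |Hf y| := by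
          have := MeasureTheory.norm_integral_le_integral_norm
            (μ := volume.restrict (Ioc (0:ℝ) (R/2))) Hf
          simpa [Real.norm_eq_abs] using this
      _ ≤ ∫ _y in Ioc (0:ℝ) (R/2), 4*B/R^2 := by
          apply MeasureTheory.setIntegral_mono_on
            ((hHf_int.mono_set hsub1).abs) (integrableOn_const (C := 4*B/R^2) measure_Ioc_lt_top.ne)
            measurableSet_Ioc hb
      _ = 4*B/R^2 * (R/2) := by
          rw [MeasureTheory.setIntegral_const, smul_eq_mul, Real.volume_real_Ioc_of_le (by linarith : (0:ℝ) ≤ R/2)]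
          ring
      _ = 2*B/R := by field_simp; ring
  -- region 2 integral bound
  have r2 : |∫ y in Ioc (R/2) (2*R), Hf y| ≤ Lc/(R/2) - Lc/(2*R) := by
    have hb : ∀ y ∈ Ioc (R/2) (2*R), |Hf y| ≤ Lc/y^2 := by
      intro y hy
      have hy0 : (0:ℝ) < y := lt_trans (by linarith) hy.1
      rw [hHq y hy0, abs_div, abs_of_pos (pow_pos hy0 2)]
      apply div_le_div_of_nonneg_right (hmid y hy.1.le hy.2) (sq_nonneg y)
    have hint2 : IntegrableOn (fun y => Lc/y^2) (Ioc (R/2) (2*R)) volume := by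
      rw [← intervalIntegrable_iff_integrableOn_Ioc_of_le (by linarith : R/2 ≤ 2*R)]
      exact invsq_intervalIntegrable Lc (by linarith) (by linarith)
    calc |∫ y in Ioc (R/2) (2*R), Hf y| ≤ ∫ y in Ioc (R/2) (2*R), |Hf y| := by
          have := MeasureTheory.norm_integral_le_integral_norm
            (μ := volume.restrict (Ioc (R/2) (2*R))) Hf
          simpa [Real.norm_eq_abs] using this
      _ ≤ ∫ y in Ioc (R/2) (2*R), Lc/y^2 := by
          apply MeasureTheory.setIntegral_mono_on
            ((hHf_int.mono_set hsub2).abs) hint2 measurableSet_Ioc hb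
      _ = Lc/(R/2) - Lc/(2*R) := by
          rw [← intervalIntegral.integral_of_le (by linarith : R/2 ≤ 2*R)]
          exact invsq_integral Lc (by linarith) (by linarith)
  -- region 3 integral bound
  have hinv3 := invsq_Ioi (by linarith : (0:ℝ) < 2*R) Lc hLc0
  have hlog3 := logdiv_Ioi (by linarith : (1:ℝ) ≤ 2*R)
  have r3 : |∫ y in Ioi (2*R), Hf y| ≤ Lc/(2*R) + 4*B*((Real.log (2*R) + 1)/(2*R)) := by
    have hb : ∀ y ∈ Ioi (2*R), |Hf y| ≤ Lc/y^2 + 4*B*(Real.log y/y^2) := by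
      intro y hy
      have hy' : 2*R < y := hy
      have hy0 : (0:ℝ) < y := by linarith
      rw [hHq y hy0, abs_div, abs_of_pos (pow_pos hy0 2)]
      have h1 := htail y hy'.le
      calc |∫ t in (0:ℝ)..y, dd η R t| / y^2 ≤ (Lc + 4*B*Real.log y)/y^2 :=
            div_le_div_of_nonneg_right h1 (sq_nonneg y)
        _ = Lc/y^2 + 4*B*(Real.log y/y^2) := by ring
    have hint3 : IntegrableOn (fun y => Lc/y^2 + 4*B*(Real.log y/y^2)) (Ioi (2*R)) volume :=
      hinv3.1.add (hlog3.1.const_mul (4*B))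
    calc |∫ y in Ioi (2*R), Hf y| ≤ ∫ y in Ioi (2*R), |Hf y| := by
          have := MeasureTheory.norm_integral_le_integral_norm
            (μ := volume.restrict (Ioi (2*R))) Hf
          simpa [Real.norm_eq_abs] using this
      _ ≤ ∫ y in Ioi (2*R), (Lc/y^2 + 4*B*(Real.log y/y^2)) := by
          apply MeasureTheory.setIntegral_mono_on
            ((hHf_int.mono_set hsub3).abs) hint3 measurableSet_Ioi hb
      _ = Lc/(2*R) + 4*B*((Real.log (2*R) + 1)/(2*R)) := by
          rw [MeasureTheory.integral_add hinv3.1 (hlog3.1.const_mul (4*B)),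
            MeasureTheory.integral_const_mul, hinv3.2, hlog3.2]
  -- combine
  have habstot : |∫ y in Ioi (0:ℝ), Hf y| ≤ 2*B/R + (Lc/(R/2) - Lc/(2*R))
      + (Lc/(2*R) + 4*B*((Real.log (2*R) + 1)/(2*R))) := by
    rw [hsplitset]
    have t1 := abs_add_le (∫ y in Ioc (0:ℝ) (R/2), Hf y)
      ((∫ y in Ioc (R/2) (2*R), Hf y) + ∫ y in Ioi (2*R), Hf y)
    have t2 := abs_add_le (∫ y in Ioc (R/2) (2*R), Hf y) (∫ y in Ioi (2*R), Hf y)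
    linarith
  -- final arithmetic
  have hfinal : 2*B/R + (Lc/(R/2) - Lc/(2*R)) + (Lc/(2*R) + 4*B*((Real.log (2*R) + 1)/(2*R)))
      ≤ (20*B + 8*(ηr - ηl) + 10*B*Real.log R)/R := by
    have hlog2R : Real.log (2*R) = Real.log 2 + Real.log R :=
      Real.log_mul (by norm_num) hR0.ne'
    have hlog2 : Real.log 2 ≤ 1 := by
      have := Real.log_le_sub_one_of_pos (by norm_num : (0:ℝ) < 2); linarith
    have heq : 2*B/R + (Lc/(R/2) - Lc/(2*R)) + (Lc/(2*R) + 4*B*((Real.log (2*R) + 1)/(2*R)))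
        = (2*B + 2*Lc + 2*B*(Real.log (2*R) + 1))/R := by
      field_simp
      ring
    rw [heq]
    have e1 : 2*B*Real.log 2 ≤ 2*B := by nlinarith
    have e2 : 0 ≤ 4*B*Real.log R := by positivity
    have hnum : 2*B + 2*Lc + 2*B*(Real.log (2*R) + 1)
        ≤ 20*B + 8*(ηr - ηl) + 10*B*Real.log R := by
      rw [hLc, hlog2R]; nlinarith
    exact div_le_div_of_nonneg_right hnum hR0.le
  -- assemble
  rw [hswap, abs_mul]
  have hpi : |(-(1/Real.pi))| ≤ 1 := by
    rw [abs_neg, abs_of_pos (div_pos one_pos Real.pi_pos), div_le_one Real.pi_pos]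
    linarith [Real.pi_gt_three]
  calc |(-(1/Real.pi))| * |∫ y in Ioi (0:ℝ), Hf y|
      ≤ 1 * |∫ y in Ioi (0:ℝ), Hf y| := mul_le_mul_of_nonneg_right hpi (abs_nonneg _)
    _ = |∫ y in Ioi (0:ℝ), Hf y| := one_mul _
    _ ≤ _ := le_trans habstot hfinal


end Aux

/-- Identity for the velocity of the Weertman profile (Proposition 2):
`c = (1/(η_r − η_l)) · lim_{R→∞} ∫_{−R}^{R} F'(η)`. -/
theorem weertman_velocity_identity
    (ηl ηr : ℝ) (hlr : ηl < ηr)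
    (F : ℝ → ℝ) (hF : ContDiff ℝ 3 F)
    (hFl : deriv F ηl = 0) (hFr : deriv F ηr = 0)
    (hFl2 : 0 < deriv (deriv F) ηl) (hFr2 : 0 < deriv (deriv F) ηr)
    (η : ℝ → ℝ) (c : ℝ)
    (hη : ContDiff ℝ 2 η)
    (hη' : ∀ x, 0 < deriv η x)
    (hbot : Tendsto η atBot (nhds ηl)) (htop : Tendsto η atTop (nhds ηr))
    (heq : ∀ x, -halfLap η x + c * deriv η x = deriv F (η x))
    (hdecay : ∃ A B : ℝ, 0 < A ∧ A < B ∧ ∀ x : ℝ, 1 ≤ |x| →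
      A / |x| ^ 2 ≤ deriv η x ∧ deriv η x ≤ B / |x| ^ 2) :
    ∃ I : ℝ, Tendsto (fun R => ∫ x in (-R)..R, deriv F (η x)) atTop (nhds I) ∧
      c = (1 / (ηr - ηl)) * I := by
  obtain ⟨A, B, hA0, hAB, hd⟩ := hdecay
  have hB0 : 0 < B := lt_trans hA0 hAB
  have hB : ∀ s : ℝ, 1 ≤ |s| → deriv η s ≤ B / |s| ^ 2 := fun s hs => (hd s hs).2
  -- the integral of the half-Laplacian over symmetric intervals tends to zero
  have hcore : Tendsto (fun R => ∫ x in (-R)..R, halfLap η x) atTop (nhds 0) := by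
    rw [tendsto_zero_iff_norm_tendsto_zero]
    apply squeeze_zero'
      (g := fun R => (20*B + 8*(ηr - ηl) + 10*B*Real.log R)/R)
    · exact Eventually.of_forall fun R => norm_nonneg _
    · filter_upwards [eventually_ge_atTop (2:ℝ)] with R hR
      have := core_bound hlr hB0 hη hη' hbot htop hB hR
      rwa [Real.norm_eq_abs]
    · have h1 : Tendsto (fun R : ℝ => (20*B + 8*(ηr - ηl)) * R⁻¹) atTop
          (nhds ((20*B + 8*(ηr - ηl)) * 0)) :=
        tendsto_const_nhds.mul tendsto_inv_atTop_zero
      have h2 : Tendsto (fun R : ℝ => (10*B) * (Real.log R / R)) atTop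
          (nhds ((10*B) * 0)) := by
        apply tendsto_const_nhds.mul
        have := Real.isLittleO_log_id_atTop.tendsto_div_nhds_zero
        apply this.congr
        intro x; simp
      have h3 := h1.add h2
      simp only [mul_zero, add_zero] at h3
      apply h3.congr
      intro R
      simp only [div_eq_mul_inv]
      ring
  have hcm : Tendsto (fun R : ℝ => c * (η R - η (-R))) atTop (nhds (c * (ηr - ηl))) := by
    have h2 : Tendsto (fun R : ℝ => η (-R)) atTop (nhds ηl) :=
      hbot.comp tendsto_neg_atTop_atBot
    exact tendsto_const_nhds.mul (htop.sub h2)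
  have hcontF' : Continuous (deriv F) := hF.continuous_deriv (by norm_num)
  have hhalfc : Continuous (halfLap η) := by
    have he : halfLap η = fun x => c * deriv η x - deriv F (η x) := by
      funext x; linarith [heq x]
    rw [he]
    exact (continuous_const.mul (hη.continuous_deriv one_le_two)).sub
      (hcontF'.comp hη.continuous)
  have heta : ∀ R : ℝ, (∫ x in (-R)..R, deriv F (η x))
      = c * (η R - η (-R)) - ∫ x in (-R)..R, halfLap η x := by
    intro R
    rw [intervalIntegral.integral_congr
      (g := fun x => c * deriv η x - halfLap η x)
      (fun x _ => by
        show deriv F (η x) = c * deriv η x - halfLap η x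
        linarith [heq x])]
    rw [intervalIntegral.integral_sub (f := fun x => c * deriv η x)
      ((continuous_const.mul (hη.continuous_deriv one_le_two)).intervalIntegrable _ _)
      (hhalfc.intervalIntegrable _ _)]
    rw [intervalIntegral.integral_const_mul, eta_ftc hη]
  refine ⟨c * (ηr - ηl), ?_, ?_⟩
  · have h4 := hcm.sub hcore
    simp only [sub_zero] at h4
    apply h4.congr
    intro R
    exact (heta R).symm
  · have hne : ηr - ηl ≠ 0 := sub_ne_zero.2 (ne_of_gt hlr)
    field_simp
end

section
/- Let η_l < η_r and let η : ℝ → ℝ be of class C² with η'' bounded on ℝ, lim_{x→−∞} η(x) = η_l, lim_{x→+∞} η(x) = η_r, and such that there exist constants B > A > 0 with A|x|^{−2} ≤ η'(x) ≤ B|x|^{−2} for all |x| ≥ 1. Then lim_{R→+∞} ∫_{−R}^{R} |∂x|η(x) dx = 0. -/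
open MeasureTheory Filter Set

set_option maxHeartbeats 1000000 in
/-- `∫_{−R}^{R} |∂x|η(x) dx → 0` as `R → +∞`. -/
theorem integral_halfLap_tendsto_zero
    (ηl ηr : ℝ) (hlr : ηl < ηr)
    (η : ℝ → ℝ) (hη : ContDiff ℝ 2 η)
    (hη'' : ∃ M : ℝ, ∀ x, |deriv (deriv η) x| ≤ M)
    (hbot : Tendsto η atBot (nhds ηl)) (htop : Tendsto η atTop (nhds ηr))
    (hdecay : ∃ A B : ℝ, 0 < A ∧ A < B ∧ ∀ x : ℝ, 1 ≤ |x| →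
      A / |x| ^ 2 ≤ deriv η x ∧ deriv η x ≤ B / |x| ^ 2) :
    Tendsto (fun R => ∫ x in (-R)..R, halfLap η x) atTop (nhds 0) := by
  obtain ⟨M, hM⟩ := hη''
  obtain ⟨A, B, hA, hAB, hdec⟩ := hdecay
  have hB : 0 < B := hA.trans hAB
  have hd1 : Differentiable ℝ η := hη.differentiable two_ne_zero
  have hηc : Continuous η := hη.continuous
  have hd'c : Continuous (deriv η) := hη.continuous_deriv one_le_two
  have h2' : ContDiff ℝ (1+1) η := by norm_num; exact hη
  have hdd : Differentiable ℝ (deriv η) :=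
    ((contDiff_succ_iff_deriv.mp h2').2.2).differentiable one_ne_zero
  have hMnn : 0 ≤ M := le_trans (abs_nonneg _) (hM 0)
  -- second difference bound
  have hsd : ∀ x y : ℝ, 0 ≤ y → |η (x + y) - 2 * η x + η (x - y)| ≤ M * y ^ 2 := by
    have hlip : ∀ a b : ℝ, |deriv η b - deriv η a| ≤ M * |b - a| := by
      intro a b
      have := convex_univ.norm_image_sub_le_of_norm_hasDerivWithin_le
        (f := deriv η) (f' := deriv (deriv η)) (s := univ)
        (fun x _ => (hdd x).hasDerivAt.hasDerivWithinAt)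
        (fun x _ => by simpa [Real.norm_eq_abs] using hM x) (mem_univ a) (mem_univ b)
      simpa [Real.norm_eq_abs] using this
    intro x y hy
    set φ : ℝ → ℝ := fun t => η (x + t) + η (x - t) with hφdef
    have hφ : ∀ t : ℝ, HasDerivAt φ (deriv η (x + t) - deriv η (x - t)) t := by
      intro t
      have h1 : HasDerivAt (fun t : ℝ => η (x + t)) (deriv η (x + t) * 1) t :=
        HasDerivAt.comp t (hd1 _).hasDerivAt ((hasDerivAt_id t).const_add x)
      have h2'' : HasDerivAt (fun t : ℝ => η (x - t)) (deriv η (x - t) * (-1)) t :=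
        HasDerivAt.comp t (hd1 _).hasDerivAt ((hasDerivAt_id t).const_sub x)
      have h3 := h1.add h2''
      simp only [mul_one, mul_neg] at h3
      rw [← sub_eq_add_neg] at h3
      exact h3
    have hint : ∫ t in (0:ℝ)..y, (deriv η (x + t) - deriv η (x - t)) = φ y - φ 0 := by
      apply intervalIntegral.integral_eq_sub_of_hasDerivAt (fun t _ => hφ t)
      exact ((hd'c.comp (continuous_const.add continuous_id)).sub
        (hd'c.comp (continuous_const.sub continuous_id))).intervalIntegrable _ _
    have hφ0 : φ 0 = 2 * η x := by simp [hφdef]; ring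
    have hφy : φ y = η (x + y) + η (x - y) := rfl
    have key : |∫ t in (0:ℝ)..y, (deriv η (x + t) - deriv η (x - t))| ≤ M * y ^ 2 := by
      have hb : ∀ᵐ t ∂volume.restrict (uIoc (0:ℝ) y),
          ‖deriv η (x + t) - deriv η (x - t)‖ ≤ 2 * M * t := by
        refine (ae_restrict_iff' measurableSet_uIoc).2 (Eventually.of_forall fun t ht => ?_)
        rw [uIoc_of_le hy] at ht
        have := hlip (x - t) (x + t)
        have he : |(x + t) - (x - t)| = 2 * t := by
          rw [abs_of_nonneg] <;> [ring_nf; linarith [ht.1.le]]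
        rw [he] at this
        simpa [Real.norm_eq_abs, mul_comm, mul_assoc, mul_left_comm] using this
      have := intervalIntegral.norm_integral_le_of_norm_le hy
        (by rw [uIoc_of_le hy] at hb; exact (ae_restrict_iff' measurableSet_Ioc).1 hb)
        ((continuous_const.mul continuous_id).intervalIntegrable _ _)
      have hcalc : ∫ t in (0:ℝ)..y, 2 * M * t = M * y ^ 2 := by
        rw [intervalIntegral.integral_const_mul, integral_id]; ring
      change _ ≤ ∫ t in (0:ℝ)..y, 2 * M * t at this
      rw [hcalc] at this
      simpa [Real.norm_eq_abs] using this
    have heq : η (x + y) - 2 * η x + η (x - y) = φ y - φ 0 := by rw [hφy, hφ0]; ring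
    rw [heq, ← hint]
    exact key
  -- tail bounds
  have hFTC : ∀ a b : ℝ, ∫ t in a..b, deriv η t = η b - η a := fun a b =>
    intervalIntegral.integral_eq_sub_of_hasDerivAt (fun t _ => (hd1 t).hasDerivAt)
      (hd'c.intervalIntegrable _ _)
  have hBint : ∀ a b : ℝ, 0 < a → a ≤ b → ∫ t in a..b, B / t ^ 2 = B / a - B / b := by
    intro a b ha hab
    have h0 : ∀ t ∈ uIcc a b, t ≠ 0 := by
      intro t ht
      rcases mem_uIcc.mp ht with h | h
      · nlinarith [h.1, h.2]
      · nlinarith [h.1, h.2]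
    have : ∫ t in a..b, B / t ^ 2 = (fun t => -B / t) b - (fun t => -B / t) a := by
      apply intervalIntegral.integral_eq_sub_of_hasDerivAt
      · intro t ht
        have hne := h0 t ht
        have := (hasDerivAt_inv hne).const_mul (-B)
        simpa only [div_eq_mul_inv] using this.congr_deriv (show -B * -(t ^ 2)⁻¹ = B / t ^ 2 by ring)
      · apply ContinuousOn.intervalIntegrable
        exact continuousOn_const.div (continuousOn_pow 2) (fun t ht => pow_ne_zero 2 (h0 t ht))
    rw [this]; field_simp; ring
  have hpos_r : ∀ x b : ℝ, 1 ≤ x → x ≤ b → 0 ≤ η b - η x ∧ η b - η x ≤ B / x := by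
    intro x b hx hxb
    have hmem : ∀ t ∈ Icc x b, 1 ≤ |t| := fun t ht => by
      rw [abs_of_pos (by linarith [ht.1] : (0:ℝ) < t)]; linarith [ht.1]
    constructor
    · rw [← hFTC x b]
      apply intervalIntegral.integral_nonneg hxb
      intro t ht
      have h := (hdec t (hmem t ht)).1
      have : 0 < A / |t| ^ 2 := div_pos hA (pow_pos (lt_of_lt_of_le one_pos (hmem t ht)) 2)
      linarith
    · rw [← hFTC x b]
      have hmono : ∫ t in x..b, deriv η t ≤ ∫ t in x..b, B / t ^ 2 := by
        apply intervalIntegral.integral_mono_on hxb (hd'c.intervalIntegrable _ _)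
        · apply ContinuousOn.intervalIntegrable
          rw [uIcc_of_le hxb]
          exact continuousOn_const.div (continuousOn_pow 2)
            (fun t ht => pow_ne_zero 2 (by intro h; rw [h] at ht; linarith [ht.1]))
        · intro t ht
          have h := (hdec t (hmem t ht)).2
          rwa [sq_abs] at h
      have := hBint x b (by linarith) hxb
      rw [this] at hmono
      have : 0 ≤ B / b := div_nonneg hB.le (by linarith)
      linarith
  have tail_r : ∀ x : ℝ, 1 ≤ x → 0 ≤ ηr - η x ∧ ηr - η x ≤ B / x := by
    intro x hx
    constructor
    · refine ge_of_tendsto (htop.sub_const (η x)) ?_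
      filter_upwards [eventually_ge_atTop x] with b hb
      exact (hpos_r x b hx hb).1
    · refine le_of_tendsto (htop.sub_const (η x)) ?_
      filter_upwards [eventually_ge_atTop x] with b hb
      exact (hpos_r x b hx hb).2
  have hpos_l : ∀ x a : ℝ, x ≤ -1 → a ≤ x → 0 ≤ η x - η a ∧ η x - η a ≤ B / (-x) := by
    intro x a hx hax
    have hmem : ∀ t ∈ Icc a x, 1 ≤ |t| := fun t ht => by
      rw [abs_of_neg (by linarith [ht.2] : t < (0:ℝ))]; linarith [ht.2]
    constructor
    · rw [← hFTC a x]
      apply intervalIntegral.integral_nonneg hax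
      intro t ht
      have h := (hdec t (hmem t ht)).1
      have : 0 < A / |t| ^ 2 := div_pos hA (pow_pos (lt_of_lt_of_le one_pos (hmem t ht)) 2)
      linarith
    · rw [← hFTC a x]
      have hBint' : ∫ t in a..x, B / t ^ 2 = B / (-x) - B / (-a) := by
        have h0 : ∀ t ∈ uIcc a x, t ≠ 0 := by
          intro t ht
          rw [uIcc_of_le hax] at ht
          intro h; rw [h] at ht; linarith [ht.2]
        have : ∫ t in a..x, B / t ^ 2 = (fun t => -B / t) x - (fun t => -B / t) a := by
          apply intervalIntegral.integral_eq_sub_of_hasDerivAt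
          · intro t ht
            have hne := h0 t ht
            have := (hasDerivAt_inv hne).const_mul (-B)
            simpa only [div_eq_mul_inv] using this.congr_deriv (show -B * -(t ^ 2)⁻¹ = B / t ^ 2 by ring)
          · apply ContinuousOn.intervalIntegrable
            exact continuousOn_const.div (continuousOn_pow 2) (fun t ht => pow_ne_zero 2 (h0 t ht))
        rw [this]; field_simp
      have hmono : ∫ t in a..x, deriv η t ≤ ∫ t in a..x, B / t ^ 2 := by
        apply intervalIntegral.integral_mono_on hax (hd'c.intervalIntegrable _ _)
        · apply ContinuousOn.intervalIntegrable
          rw [uIcc_of_le hax]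
          exact continuousOn_const.div (continuousOn_pow 2)
            (fun t ht => pow_ne_zero 2 (by intro h; rw [h] at ht; linarith [ht.2]))
        · intro t ht
          have h := (hdec t (hmem t ht)).2
          rwa [sq_abs] at h
      rw [hBint'] at hmono
      have : 0 ≤ B / (-a) := div_nonneg hB.le (by linarith)
      linarith
  have tail_l : ∀ x : ℝ, x ≤ -1 → 0 ≤ η x - ηl ∧ η x - ηl ≤ B / (-x) := by
    intro x hx
    constructor
    · have h : Tendsto (fun a => η x - η a) atBot (nhds (η x - ηl)) :=
        (tendsto_const_nhds.sub hbot)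
      refine ge_of_tendsto h ?_
      filter_upwards [eventually_le_atBot x] with a ha
      exact (hpos_l x a hx ha).1
    · have h : Tendsto (fun a => η x - η a) atBot (nhds (η x - ηl)) :=
        (tendsto_const_nhds.sub hbot)
      refine le_of_tendsto h ?_
      filter_upwards [eventually_le_atBot x] with a ha
      exact (hpos_l x a hx ha).2
  -- global bound on η
  obtain ⟨C0, hC0⟩ := isCompact_Icc.exists_bound_of_continuousOn
    (s := Icc (-1:ℝ) 1) hηc.continuousOn
  set Cb : ℝ := max C0 (max (|ηr| + B) (|ηl| + B)) with hCbdef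
  have hηb : ∀ x : ℝ, |η x| ≤ Cb := by
    intro x
    rcases le_total x (-1) with hx | hx
    · have h := tail_l x hx
      have h1 : B / (-x) ≤ B := by
        rw [div_le_iff₀ (by linarith)]
        nlinarith
      have h2 : |η x| ≤ |ηl| + B := by
        rw [abs_le]; constructor
        · nlinarith [neg_abs_le ηl, h.1]
        · nlinarith [le_abs_self ηl, h.2]
      exact le_trans h2 (le_trans (le_max_right _ _) (le_max_right _ _))
    rcases le_total 1 x with hx1 | hx1
    · have h := tail_r x hx1
      have h1 : B / x ≤ B := by
        rw [div_le_iff₀ (by linarith)]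
        nlinarith
      have h2 : |η x| ≤ |ηr| + B := by
        rw [abs_le]; constructor
        · nlinarith [neg_abs_le ηr, h.2]
        · nlinarith [le_abs_self ηr, h.1]
      exact le_trans h2 (le_trans (le_max_left _ _) (le_max_right _ _))
    · have := hC0 x ⟨hx, hx1⟩
      rw [Real.norm_eq_abs] at this
      exact le_trans this (le_max_left _ _)
  have hCbnn : 0 ≤ Cb := le_trans (abs_nonneg _) (hηb 0)
  -- the symmetrized function f
  set f : ℝ → ℝ := fun t => η t + η (-t) - (ηr + ηl) with hfdef
  have hfc : Continuous f := (hηc.add (hηc.comp continuous_neg)).sub continuous_const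
  set D : ℝ := max (2 * Cb + |ηr + ηl|) (2 * B) with hDdef
  have hD : 0 < D := lt_of_lt_of_le (by linarith : (0:ℝ) < 2 * B) (le_max_right _ _)
  have hD2B : 2 * B ≤ D := le_max_right _ _
  have hfb : ∀ u : ℝ, |f u| ≤ D := by
    intro u
    have h1 := hηb u; have h2 := hηb (-u)
    have h3 : |f u| ≤ 2 * Cb + |ηr + ηl| := by
      calc |f u| ≤ |η u + η (-u)| + |ηr + ηl| := abs_sub _ _
        _ ≤ |η u| + |η (-u)| + |ηr + ηl| := by linarith [abs_add_le (η u) (η (-u))]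
        _ ≤ 2 * Cb + |ηr + ηl| := by linarith
    exact le_trans h3 (le_max_left _ _)
  have hft : ∀ u : ℝ, 1 ≤ u → |f u| ≤ 2 * B / u := by
    intro u hu
    have hr := tail_r u hu
    have hl := tail_l (-u) (by linarith)
    have h0 : f u = -(ηr - η u) + (η (-u) - ηl) := by simp only [hfdef]; ring
    rw [h0]
    have hnn : -(-u) = u := by ring
    rw [hnn] at hl
    calc |-(ηr - η u) + (η (-u) - ηl)| ≤ |-(ηr - η u)| + |η (-u) - ηl| := abs_add_le _ _
      _ = (ηr - η u) + (η (-u) - ηl) := by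
          rw [abs_neg, abs_of_nonneg hr.1, abs_of_nonneg hl.1]
      _ ≤ B / u + B / u := by linarith [hr.2, hl.2]
      _ = 2 * B / u := by ring
  have hfe : ∀ u : ℝ, f (-u) = f u := by
    intro u; simp only [hfdef, neg_neg]; ring
  -- case 1 bound (small y)
  have bound1 : ∀ R y : ℝ, 2 ≤ R → 0 < y → 2 * y ≤ R →
      |(∫ t in R..(R + y), f t) - ∫ t in (R - y)..R, f t| ≤ (8 * B / R ^ 2) * y * y := by
    intro R y hR hy hyR
    have hR0 : 0 < R := by linarith
    have e1 : ∫ t in R..(R + y), f t = ∫ t in (0:ℝ)..y, f (t + R) := by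
      rw [intervalIntegral.integral_comp_add_right (fun t => f t) R]
      norm_num [add_comm]
    have e2 : ∫ t in (R - y)..R, f t = ∫ t in (0:ℝ)..y, f (t + (R - y)) := by
      rw [intervalIntegral.integral_comp_add_right (fun t => f t) (R - y)]
      norm_num [add_comm]
    have hi1 : IntervalIntegrable (fun t => f (t + R)) volume 0 y :=
      (hfc.comp (continuous_id.add continuous_const)).intervalIntegrable _ _
    have hi2 : IntervalIntegrable (fun t => f (t + (R - y))) volume 0 y :=
      (hfc.comp (continuous_id.add continuous_const)).intervalIntegrable _ _
    have hsub : (∫ t in R..(R + y), f t) - ∫ t in (R - y)..R, f t =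
        ∫ t in (0:ℝ)..y, (f (t + R) - f (t + (R - y))) := by
      rw [e1, e2, ← intervalIntegral.integral_sub hi1 hi2]
    have hmvt : ∀ u v : ℝ, u ∈ Icc (R/2) (2*R) → v ∈ Icc (R/2) (2*R) →
        |f v - f u| ≤ (8 * B / R ^ 2) * |v - u| := by
      intro u v hu hv
      have hds : ∀ w : ℝ, w ∈ Icc (R/2) (2*R) →
          HasDerivWithinAt f (deriv η w - deriv η (-w)) (Icc (R/2) (2*R)) w := by
        intro w _
        have h1 : HasDerivAt (fun x : ℝ => η (-x)) (deriv η (-w) * (-1)) w :=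
          HasDerivAt.comp w (hd1 _).hasDerivAt (hasDerivAt_neg w)
        have h2'' : HasDerivAt f (deriv η w + deriv η (-w) * (-1) - 0) w :=
          ((hd1 w).hasDerivAt.add h1).sub (hasDerivAt_const w _)
        have h3 : HasDerivAt f (deriv η w - deriv η (-w)) w := by
          convert h2'' using 1; ring
        exact h3.hasDerivWithinAt
      have hbd : ∀ w : ℝ, w ∈ Icc (R/2) (2*R) →
          ‖deriv η w - deriv η (-w)‖ ≤ 8 * B / R ^ 2 := by
        intro w hw
        have hw1 : 1 ≤ w := by
          rcases hw with ⟨h1, _⟩; linarith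
        have hw0 : 0 < w := by linarith
        have habs : |w| = w := abs_of_pos hw0
        have h1 := hdec w (by rw [habs]; exact hw1)
        have h2'' := hdec (-w) (by rw [abs_neg, habs]; exact hw1)
        have hb1 : |deriv η w| ≤ B / w ^ 2 := by
          rw [abs_of_nonneg]
          · rw [habs] at h1; exact h1.2
          · have := h1.1; have hpos : 0 < A / |w| ^ 2 := div_pos hA (by positivity)
            linarith
        have hb2 : |deriv η (-w)| ≤ B / w ^ 2 := by
          rw [abs_of_nonneg]
          · have := h2''.2; rwa [abs_neg, habs] at this
          · have := h2''.1
            have hpos : 0 < A / |(-w)| ^ 2 := div_pos hA (by rw [abs_neg, habs]; positivity)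
            linarith
        have hsq : R ^ 2 ≤ 4 * w ^ 2 := by nlinarith [hw.1, hR0]
        calc ‖deriv η w - deriv η (-w)‖ ≤ |deriv η w| + |deriv η (-w)| := by
              rw [Real.norm_eq_abs]; exact abs_sub _ _
          _ ≤ 2 * (B / w ^ 2) := by linarith
          _ = 2 * B / w ^ 2 := by ring
          _ ≤ 8 * B / R ^ 2 := by
              rw [div_le_div_iff₀ (by positivity) (by positivity)]
              nlinarith [hB.le]
      have := (convex_Icc (R/2) (2*R)).norm_image_sub_le_of_norm_hasDerivWithin_le
        hds hbd hu hv
      simpa [Real.norm_eq_abs] using this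
    rw [hsub]
    have hbound : ∀ t ∈ uIoc (0:ℝ) y, ‖f (t + R) - f (t + (R - y))‖ ≤ (8 * B / R ^ 2) * y := by
      intro t ht
      rw [uIoc_of_le hy.le] at ht
      have ht0 : 0 < t := ht.1
      have hty : t ≤ y := ht.2
      have hm1 : t + R ∈ Icc (R/2) (2*R) := ⟨by linarith, by linarith⟩
      have hm2 : t + (R - y) ∈ Icc (R/2) (2*R) := ⟨by linarith, by linarith⟩
      have := hmvt (t + (R - y)) (t + R) hm2 hm1
      have he : |(t + R) - (t + (R - y))| = y := by
        rw [show (t + R) - (t + (R - y)) = y by ring, abs_of_pos hy]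
      rw [he] at this
      simpa [Real.norm_eq_abs] using this
    have := intervalIntegral.norm_integral_le_of_norm_le_const hbound
    rw [Real.norm_eq_abs] at this
    have he2 : |y - 0| = y := by rw [sub_zero, abs_of_pos hy]
    rw [he2] at this
    simpa [mul_assoc] using this
  -- case 2 bound (large y)
  have bound2 : ∀ R y : ℝ, 0 < R → R ≤ 2 * y → 1 ≤ y →
      |(∫ t in R..(R + y), f t) - ∫ t in (R - y)..R, f t| ≤ 16 * D * y ^ ((1:ℝ)/2) := by
    intro R y hR hR2y hy1
    set a : ℝ := R + y with ha
    have hy : 0 < y := by linarith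
    have ha0 : 0 < a := by linarith
    have hfs : ∀ u : ℝ, 0 < u → |f u| ≤ D * u ^ (-(1:ℝ)/2) := by
      intro u hu
      rcases le_total u 1 with h1 | h1
      · have h2 : (1:ℝ) ≤ u ^ (-(1:ℝ)/2) :=
          Real.one_le_rpow_of_pos_of_le_one_of_nonpos hu h1 (by norm_num)
        calc |f u| ≤ D := hfb u
          _ = D * 1 := by ring
          _ ≤ D * u ^ (-(1:ℝ)/2) := by nlinarith
      · have h2 : |f u| ≤ 2 * B / u := hft u h1
        have h3 : 2 * B / u ≤ D / u := by gcongr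
        have h4 : D / u = D * u ^ (-1:ℝ) := by
          rw [Real.rpow_neg_one]; ring
        have h5 : u ^ (-1:ℝ) ≤ u ^ (-(1:ℝ)/2) :=
          Real.rpow_le_rpow_of_exponent_le h1 (by norm_num)
        calc |f u| ≤ D / u := le_trans h2 h3
          _ = D * u ^ (-1:ℝ) := h4
          _ ≤ D * u ^ (-(1:ℝ)/2) := by nlinarith
    have habs : ∫ t in (0:ℝ)..a, |f t| ≤ 2 * D * a ^ ((1:ℝ)/2) := by
      have hib : IntervalIntegrable (fun t : ℝ => D * t ^ (-(1:ℝ)/2)) volume 0 a :=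
        (intervalIntegral.intervalIntegrable_rpow' (by norm_num)).const_mul D
      have hmono : ∫ t in (0:ℝ)..a, |f t| ≤ ∫ t in (0:ℝ)..a, D * t ^ (-(1:ℝ)/2) := by
        rw [intervalIntegral.integral_of_le ha0.le, intervalIntegral.integral_of_le ha0.le]
        apply setIntegral_mono_on
        · exact (hfc.abs.intervalIntegrable 0 a).1
        · exact hib.1
        · exact measurableSet_Ioc
        · intro u hu
          exact hfs u hu.1
      have hval : ∫ t in (0:ℝ)..a, D * t ^ (-(1:ℝ)/2) = 2 * D * a ^ ((1:ℝ)/2) := by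
        rw [intervalIntegral.integral_const_mul, integral_rpow (Or.inl (by norm_num))]
        rw [Real.zero_rpow (by norm_num)]
        norm_num
        ring
      linarith
    have hJ : |(∫ t in R..(R + y), f t) - ∫ t in (R - y)..R, f t| ≤
        4 * ∫ t in (0:ℝ)..a, |f t| := by
      have hint1 : |∫ t in R..(R + y), f t| ≤ ∫ t in R..(R + y), |f t| := by
        simpa [Real.norm_eq_abs] using
          intervalIntegral.norm_integral_le_integral_norm (f := f) (a := R) (b := R + y)
            (by linarith)
      have hint2 : |∫ t in (R - y)..R, f t| ≤ ∫ t in (R - y)..R, |f t| := by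
        simpa [Real.norm_eq_abs] using
          intervalIntegral.norm_integral_le_integral_norm (f := f) (a := R - y) (b := R)
            (by linarith)
      have hflip : ∫ t in (-a)..(0:ℝ), |f t| = ∫ t in (0:ℝ)..a, |f t| := by
        have := intervalIntegral.integral_comp_neg (a := (0:ℝ)) (b := a) (fun t => |f t|)
        simp only [neg_zero] at this
        rw [← this]
        congr 1
        ext t
        rw [hfe t]
      have hmono1 : ∫ t in R..(R + y), |f t| ≤ ∫ t in (-a)..a, |f t| := by
        apply intervalIntegral.integral_mono_interval (by linarith) (by linarith) (by linarith)
        · exact Eventually.of_forall fun t => abs_nonneg _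
        · exact hfc.abs.intervalIntegrable _ _
      have hmono2 : ∫ t in (R - y)..R, |f t| ≤ ∫ t in (-a)..a, |f t| := by
        apply intervalIntegral.integral_mono_interval (by linarith) (by linarith) (by linarith)
        · exact Eventually.of_forall fun t => abs_nonneg _
        · exact hfc.abs.intervalIntegrable _ _
      have hsplit : ∫ t in (-a)..a, |f t| =
          (∫ t in (-a)..(0:ℝ), |f t|) + ∫ t in (0:ℝ)..a, |f t| :=
        (intervalIntegral.integral_add_adjacent_intervals (hfc.abs.intervalIntegrable _ _)
          (hfc.abs.intervalIntegrable _ _)).symm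
      have h2 : ∫ t in (-a)..a, |f t| = 2 * ∫ t in (0:ℝ)..a, |f t| := by
        rw [hsplit, hflip]; ring
      calc |(∫ t in R..(R + y), f t) - ∫ t in (R - y)..R, f t|
          ≤ |∫ t in R..(R + y), f t| + |∫ t in (R - y)..R, f t| := abs_sub _ _
        _ ≤ (∫ t in R..(R + y), |f t|) + ∫ t in (R - y)..R, |f t| := by linarith
        _ ≤ 2 * ∫ t in (-a)..a, |f t| := by linarith
        _ = 4 * ∫ t in (0:ℝ)..a, |f t| := by rw [h2]; ring
    have hay : a ^ ((1:ℝ)/2) ≤ 2 * y ^ ((1:ℝ)/2) := by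
      have h4y : a ≤ 4 * y := by linarith
      have h1 : a ^ ((1:ℝ)/2) ≤ (4 * y) ^ ((1:ℝ)/2) :=
        Real.rpow_le_rpow ha0.le h4y (by norm_num)
      have h2 : ((4:ℝ) * y) ^ ((1:ℝ)/2) = 4 ^ ((1:ℝ)/2) * y ^ ((1:ℝ)/2) :=
        Real.mul_rpow (by norm_num) hy.le
      have h3 : (4:ℝ) ^ ((1:ℝ)/2) = 2 := by
        rw [show (4:ℝ) = 2 ^ (2:ℕ) by norm_num, ← Real.rpow_natCast 2 2,
          ← Real.rpow_mul (by norm_num)]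
        norm_num
      rw [h2, h3] at h1
      exact h1
    calc |(∫ t in R..(R + y), f t) - ∫ t in (R - y)..R, f t|
        ≤ 4 * ∫ t in (0:ℝ)..a, |f t| := hJ
      _ ≤ 4 * (2 * D * a ^ ((1:ℝ)/2)) := by linarith
      _ ≤ 4 * (2 * D * (2 * y ^ ((1:ℝ)/2))) := by nlinarith
      _ = 16 * D * y ^ ((1:ℝ)/2) := by ring
  -- Fubini identity
  have heq : ∀ R : ℝ, 0 < R →
      ∫ x in (-R)..R, halfLap η x = -(1 / Real.pi) *
        ∫ y in Set.Ioi (0:ℝ),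
          ((∫ t in R..(R + y), f t) - ∫ t in (R - y)..R, f t) / y ^ 2 := by
    intro R hR
    have hRR : -R ≤ R := by linarith
    set F : ℝ → ℝ := fun x => ∫ t in (0:ℝ)..x, η t with hFdef
    have hFab : ∀ a b : ℝ, ∫ t in a..b, η t = F b - F a := by
      intro a b
      have h1 := intervalIntegral.integral_add_adjacent_intervals
        (hηc.intervalIntegrable (μ := volume) 0 a) (hηc.intervalIntegrable (μ := volume) a b)
      simp only [hFdef]
      linarith
    have hfab : ∀ a b : ℝ, ∫ t in a..b, f t =
        (F b - F a) + (F (-a) - F (-b)) - (ηr + ηl) * (b - a) := by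
      intro a b
      have i1 : IntervalIntegrable η volume a b := hηc.intervalIntegrable _ _
      have i2 : IntervalIntegrable (fun t : ℝ => η (-t)) volume a b :=
        (hηc.comp continuous_neg).intervalIntegrable _ _
      have i3 : IntervalIntegrable (fun _ : ℝ => ηr + ηl) volume a b :=
        intervalIntegrable_const
      have e0 : ∫ t in a..b, f t =
          (∫ t in a..b, (η t + η (-t))) - ∫ t in a..b, (ηr + ηl) :=
        intervalIntegral.integral_sub (i1.add i2) i3
      have e1 : ∫ t in a..b, (η t + η (-t)) = (∫ t in a..b, η t) + ∫ t in a..b, η (-t) :=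
        intervalIntegral.integral_add i1 i2
      have e2 : ∫ t in a..b, η (-t) = F (-a) - F (-b) := by
        rw [intervalIntegral.integral_comp_neg fun t => η t, hFab]
      have e3 : ∫ t in a..b, (fun _ : ℝ => ηr + ηl) t = (b - a) * (ηr + ηl) := by
        rw [intervalIntegral.integral_const]; simp [smul_eq_mul]
      rw [e0, e1, e2, hFab]
      rw [show (∫ t in a..b, (ηr + ηl)) = (b - a) * (ηr + ηl) from e3]
      ring
    have hinner : ∀ y : ℝ, 0 < y →
        ∫ x in Ioc (-R) R, (η (x + y) - 2 * η x + η (x - y)) / y ^ 2 =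
        ((∫ t in R..(R + y), f t) - ∫ t in (R - y)..R, f t) / y ^ 2 := by
      intro y hy
      rw [← intervalIntegral.integral_of_le hRR]
      rw [intervalIntegral.integral_div]
      congr 1
      have j1 : IntervalIntegrable (fun x : ℝ => η (x + y)) volume (-R) R :=
        (hηc.comp (continuous_id.add continuous_const)).intervalIntegrable _ _
      have j2 : IntervalIntegrable (fun x : ℝ => 2 * η x) volume (-R) R :=
        (continuous_const.mul hηc).intervalIntegrable _ _
      have j3 : IntervalIntegrable (fun x : ℝ => η (x - y)) volume (-R) R :=
        (hηc.comp (continuous_id.sub continuous_const)).intervalIntegrable _ _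
      have e0 : ∫ x in (-R)..R, (η (x + y) - 2 * η x + η (x - y)) =
          ((∫ x in (-R)..R, η (x + y)) - ∫ x in (-R)..R, 2 * η x) +
            ∫ x in (-R)..R, η (x - y) := by
        rw [intervalIntegral.integral_add (j1.sub j2) j3, intervalIntegral.integral_sub j1 j2]
      have s1 : ∫ x in (-R)..R, η (x + y) = F (R + y) - F (-R + y) := by
        rw [intervalIntegral.integral_comp_add_right (fun t => η t) y, hFab]
      have s2 : ∫ x in (-R)..R, η (x - y) = F (R - y) - F (-R - y) := by
        rw [intervalIntegral.integral_comp_sub_right (fun t => η t) y, hFab]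
      have s3 : ∫ x in (-R)..R, 2 * η x = 2 * (F R - F (-R)) := by
        rw [intervalIntegral.integral_const_mul, hFab]
      rw [e0, s1, s2, s3, hfab, hfab]
      rw [show -(R + y) = -R - y from by ring, show -(R - y) = -R + y from by ring]
      ring
    have hmeas : Measurable
        (fun p : ℝ × ℝ => (η (p.1 + p.2) - 2 * η p.1 + η (p.1 - p.2)) / p.2 ^ 2) := by
      apply Measurable.div
      · exact ((hηc.measurable.comp (measurable_fst.add measurable_snd)).sub
          ((hηc.measurable.comp measurable_fst).const_mul 2)).add
          (hηc.measurable.comp (measurable_fst.sub measurable_snd))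
      · exact measurable_snd.pow_const 2
    have hprod : Integrable
        (fun p : ℝ × ℝ => (η (p.1 + p.2) - 2 * η p.1 + η (p.1 - p.2)) / p.2 ^ 2)
        ((volume.restrict (Ioc (-R) R)).prod (volume.restrict (Ioi 0))) := by
      apply Integrable.mono' (g := fun p : ℝ × ℝ => (M + 4 * Cb) * (1 + p.2 ^ 2)⁻¹)
      · apply Integrable.mul_prod (f := fun _ : ℝ => M + 4 * Cb)
          (g := fun y : ℝ => (1 + y ^ 2)⁻¹)
        · exact integrableOn_const measure_Ioc_lt_top.ne
        · exact integrable_inv_one_add_sq.restrict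
      · exact hmeas.aestronglyMeasurable
      · rw [Measure.prod_restrict]
        refine (ae_restrict_iff' (measurableSet_Ioc.prod measurableSet_Ioi)).2
          (Eventually.of_forall ?_)
        rintro ⟨x, y⟩ hp
        have hy : 0 < y := hp.2
        have h1 := hsd x y hy.le
        have h2 : |η (x + y) - 2 * η x + η (x - y)| ≤ 4 * Cb := by
          have := hηb (x + y); have := hηb x; have := hηb (x - y)
          have a1 := abs_add_le (η (x + y) - 2 * η x) (η (x - y))
          have a2 := abs_sub (η (x + y)) (2 * η x)
          have a3 : |2 * η x| = 2 * |η x| := by rw [abs_mul]; norm_num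
          nlinarith [abs_nonneg (η (x+y)), abs_nonneg (η x), abs_nonneg (η (x-y))]
        rw [Real.norm_eq_abs, abs_div, abs_pow, abs_of_pos hy]
        rw [div_le_iff₀ (by positivity), mul_comm ((M + 4*Cb)) _]
        rw [inv_mul_eq_div, div_mul_eq_mul_div, le_div_iff₀ (by positivity)]
        nlinarith [abs_nonneg (η (x + y) - 2 * η x + η (x - y)), sq_nonneg y]
    have hswap := MeasureTheory.integral_integral_swap
      (f := fun x y => (η (x + y) - 2 * η x + η (x - y)) / y ^ 2) hprod
    have hlhs : ∫ x in (-R)..R, halfLap η x =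
        -(1 / Real.pi) * ∫ x in Ioc (-R) R,
          (∫ y in Ioi (0:ℝ), (η (x + y) - 2 * η x + η (x - y)) / y ^ 2) := by
      unfold halfLap
      rw [intervalIntegral.integral_const_mul, intervalIntegral.integral_of_le hRR]
    rw [hlhs]
    congr 1
    rw [hswap]
    apply setIntegral_congr_fun measurableSet_Ioi
    intro y hy
    exact hinner y hy
  -- dominated convergence
  have hmain : Tendsto (fun R : ℝ => ∫ y in Ioi (0:ℝ),
      ((∫ t in R..(R + y), f t) - ∫ t in (R - y)..R, f t) / y ^ 2) atTop (nhds 0) := by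
    set J : ℝ → ℝ → ℝ :=
      fun R y => ((∫ t in R..(R + y), f t) - ∫ t in (R - y)..R, f t) with hJdef
    set hb : ℝ → ℝ := fun y => 4 * B * (1 + y ^ 2)⁻¹ +
      (Ioi (1:ℝ)).indicator (fun y => 16 * D * y ^ (-(3:ℝ)/2)) y with hhdef
    have hFf : Continuous (fun x : ℝ => ∫ t in (0:ℝ)..x, f t) :=
      intervalIntegral.continuous_primitive (fun a b => hfc.intervalIntegrable a b) 0
    have hFfab : ∀ a b : ℝ, ∫ t in a..b, f t =
        (∫ t in (0:ℝ)..b, f t) - ∫ t in (0:ℝ)..a, f t := by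
      intro a b
      have h1 := intervalIntegral.integral_add_adjacent_intervals
        (hfc.intervalIntegrable (μ := volume) 0 a) (hfc.intervalIntegrable (μ := volume) a b)
      linarith
    have hJcont : ∀ R : ℝ, Continuous (fun y => J R y) := by
      intro R
      have hrw : (fun y => J R y) = fun y =>
          ((∫ t in (0:ℝ)..(R + y), f t) - ∫ t in (0:ℝ)..R, f t) -
            ((∫ t in (0:ℝ)..R, f t) - ∫ t in (0:ℝ)..(R - y), f t) := by
        funext y
        simp only [hJdef]
        rw [hFfab R (R + y), hFfab (R - y) R]
      rw [hrw]
      exact ((hFf.comp (continuous_const.add continuous_id)).sub continuous_const).sub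
        (continuous_const.sub (hFf.comp (continuous_const.sub continuous_id)))
    have hmeas : ∀ᶠ R : ℝ in atTop, AEStronglyMeasurable (fun y => J R y / y ^ 2)
        (volume.restrict (Ioi 0)) := by
      refine Eventually.of_forall fun R => ?_
      exact (((hJcont R).measurable).div ((measurable_id.pow_const 2))).aestronglyMeasurable
    have h_bound : ∀ᶠ R : ℝ in atTop, ∀ᵐ y ∂volume.restrict (Ioi (0:ℝ)),
        ‖J R y / y ^ 2‖ ≤ hb y := by
      filter_upwards [eventually_ge_atTop (2:ℝ)] with R hR
      refine (ae_restrict_iff' measurableSet_Ioi).2 (Eventually.of_forall fun y hy => ?_)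
      have hy0 : (0:ℝ) < y := hy
      have hy2 : (0:ℝ) < y ^ 2 := by positivity
      have hind_nonneg : 0 ≤ (Ioi (1:ℝ)).indicator (fun y => 16 * D * y ^ (-(3:ℝ)/2)) y := by
        apply Set.indicator_nonneg
        intro z hz
        exact mul_nonneg (by positivity)
          (Real.rpow_nonneg (le_of_lt (lt_trans zero_lt_one hz)) _)
      rw [Real.norm_eq_abs, abs_div, abs_pow, abs_of_pos hy0]
      rcases le_or_gt (2 * y) R with hc | hc
      · have h1 := bound1 R y hR hy0 hc
        have h2 : |J R y| / y ^ 2 ≤ 8 * B / R ^ 2 := by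
          rw [div_le_iff₀ hy2]
          calc |J R y| ≤ (8 * B / R ^ 2) * y * y := h1
            _ = 8 * B / R ^ 2 * y ^ 2 := by ring
        have h3 : 8 * B / R ^ 2 ≤ 4 * B * (1 + y ^ 2)⁻¹ := by
          rw [show 4 * B * (1 + y ^ 2)⁻¹ = 4 * B / (1 + y ^ 2) from by rw [div_eq_mul_inv],
            div_le_div_iff₀ (by positivity) (by positivity)]
          have h4y : 4 * y ^ 2 ≤ R ^ 2 := by nlinarith
          have h4 : (4:ℝ) ≤ R ^ 2 := by nlinarith
          nlinarith [mul_le_mul_of_nonneg_left h4y hB.le, mul_le_mul_of_nonneg_left h4 hB.le]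
        simp only [hhdef]
        linarith
      · have hy1 : (1:ℝ) < y := by linarith
        have h1 := bound2 R y (by linarith) hc.le (by linarith)
        have h2 : |J R y| / y ^ 2 ≤ 16 * D * y ^ (-(3:ℝ)/2) := by
          rw [div_le_iff₀ hy2]
          have e1 : y ^ (-(3:ℝ)/2) * y ^ 2 = y ^ ((1:ℝ)/2) := by
            rw [show (y:ℝ) ^ (2:ℕ) = y ^ ((2:ℝ)) from by
              rw [← Real.rpow_natCast y 2]; norm_num,
              ← Real.rpow_add hy0]
            norm_num
          calc |J R y| ≤ 16 * D * y ^ ((1:ℝ)/2) := h1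
            _ = 16 * D * (y ^ (-(3:ℝ)/2) * y ^ 2) := by rw [e1]
            _ = 16 * D * y ^ (-(3:ℝ)/2) * y ^ 2 := by ring
        have h3 : (Ioi (1:ℝ)).indicator (fun y => 16 * D * y ^ (-(3:ℝ)/2)) y =
            16 * D * y ^ (-(3:ℝ)/2) := Set.indicator_of_mem hy1 _
        have h4 : 0 ≤ 4 * B * (1 + y ^ 2)⁻¹ := by positivity
        simp only [hhdef]
        rw [h3]
        linarith
    have h_int : Integrable hb (volume.restrict (Ioi (0:ℝ))) := by
      apply Integrable.add
      · exact ((integrable_inv_one_add_sq).const_mul (4 * B)).restrict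
      · apply (integrable_indicator_iff measurableSet_Ioi).2
        have hg : IntegrableOn (fun y : ℝ => 16 * D * y ^ (-(3:ℝ)/2)) (Ioi 1) volume := by
          have := integrableOn_Ioi_rpow_of_lt (a := -(3:ℝ)/2) (by norm_num) (c := 1) one_pos
          exact this.const_mul (16 * D)
        have hre : Ioi (1:ℝ) ∩ Ioi (0:ℝ) = Ioi 1 := by
          rw [Set.Ioi_inter_Ioi]; norm_num
        unfold IntegrableOn
        rw [Measure.restrict_restrict measurableSet_Ioi, hre]
        exact hg
    have h_lim : ∀ᵐ y ∂volume.restrict (Ioi (0:ℝ)),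
        Tendsto (fun R => J R y / y ^ 2) atTop (nhds 0) := by
      refine (ae_restrict_iff' measurableSet_Ioi).2 (Eventually.of_forall fun y hy => ?_)
      have hy0 : (0:ℝ) < y := hy
      apply squeeze_zero_norm' (a := fun R => 8 * B / R ^ 2)
      · filter_upwards [eventually_ge_atTop (max 2 (2 * y))] with R hR
        have hR2 : 2 ≤ R := le_trans (le_max_left _ _) hR
        have hRy : 2 * y ≤ R := le_trans (le_max_right _ _) hR
        have h1 := bound1 R y hR2 hy0 hRy
        rw [Real.norm_eq_abs, abs_div, abs_pow, abs_of_pos hy0, div_le_iff₀ (by positivity)]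
        calc |J R y| ≤ (8 * B / R ^ 2) * y * y := h1
          _ = 8 * B / R ^ 2 * y ^ 2 := by ring
      · exact Tendsto.div_atTop tendsto_const_nhds (tendsto_pow_atTop two_ne_zero)
    have := MeasureTheory.tendsto_integral_filter_of_dominated_convergence
      (μ := volume.restrict (Ioi (0:ℝ)))
      (F := fun R (y:ℝ) => J R y / y ^ 2) (f := fun _ => (0:ℝ)) hb hmeas h_bound h_int h_lim
    simpa using this
  -- conclude
  have hfinal := hmain.const_mul (-(1 / Real.pi))
  rw [mul_zero] at hfinal
  apply hfinal.congr'
  filter_upwards [eventually_gt_atTop (0:ℝ)] with R hR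
  exact (heq R hR).symm
end

section
/- Sub- and super-solutions: let η_l < η_r, let F : ℝ → ℝ be of class C³ with F', F'', F''' bounded, bistable between η_l and η_r, and let Δ₀ > 0 be such that F'' > 0 on [η_l − Δ₀, η_l + Δ₀] ∪ [η_r − Δ₀, η_r + Δ₀]. Let η : ℝ → ℝ be of class C², bounded, with η' > 0, lim_{x→−∞} η(x) = η_l, lim_{x→+∞} η(x) = η_r, and −|∂x|η(x) + c η'(x) = F'(η(x)) for all x, for some c ∈ ℝ. Let 0 < Δ₁ < Δ₀. Then there exist positive constants σ and β such that for every δ ∈ (0, Δ₁), every l ∈ ℝ and every i ∈ {−1, +1}, the function w_i(t,x) = η(ζ_i(t,x)) + i δ e^{−βt}, where ζ_i(t,x) = x − ct + i l + i σ δ (1 − e^{−βt}), satisfies i·(∂_t w_i(t,x) + |∂x|w_i(t,·)(x) + F'(w_i(t,x))) ≥ 0 for all t ≥ 0 and x ∈ ℝ. -/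
open MeasureTheory Filter Set

lemma halfLap_shift (u : ℝ → ℝ) (a b x : ℝ) (v : ℝ → ℝ) (hv : ∀ y, v y = u (y + a) + b) :
    halfLap v x = halfLap u (x + a) := by
  unfold halfLap
  congr 1
  apply setIntegral_congr_fun measurableSet_Ioi
  intro y _
  simp only [hv]
  have h1 : x + y + a = x + a + y := by ring
  have h2 : x - y + a = x + a - y := by ring
  rw [h1, h2]
  ring

lemma deriv_w (η : ℝ → ℝ) (hη : Differentiable ℝ η) (x c i l σ δ β t : ℝ) :
    deriv (fun s => η (x - c * s + i * l + i * σ * δ * (1 - Real.exp (-β * s)))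
        + i * δ * Real.exp (-β * s)) t
      = deriv η (x - c * t + i * l + i * σ * δ * (1 - Real.exp (-β * t)))
          * (-c + i * σ * δ * (β * Real.exp (-β * t)))
        - i * δ * β * Real.exp (-β * t) := by
  have hexp : HasDerivAt (fun s : ℝ => Real.exp (-β * s)) (Real.exp (-β * t) * (-β * 1)) t :=
    ((hasDerivAt_id t).const_mul (-β)).exp
  have hζ : HasDerivAt (fun s : ℝ => x - c * s + i * l + i * σ * δ * (1 - Real.exp (-β * s)))
      ((0 - c * 1 + 0) + i * σ * δ * (0 - Real.exp (-β * t) * (-β * 1))) t := by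
    exact (((hasDerivAt_const t x).sub ((hasDerivAt_id t).const_mul c)).add
      (hasDerivAt_const t (i * l))).add
      (((hasDerivAt_const t 1).sub hexp).const_mul (i * σ * δ))
  have hw : HasDerivAt (fun s => η (x - c * s + i * l + i * σ * δ * (1 - Real.exp (-β * s)))
        + i * δ * Real.exp (-β * s))
      (deriv η (x - c * t + i * l + i * σ * δ * (1 - Real.exp (-β * t))) *
          ((0 - c * 1 + 0) + i * σ * δ * (0 - Real.exp (-β * t) * (-β * 1))) +
        i * δ * (Real.exp (-β * t) * (-β * 1))) t :=
    ((hη _).hasDerivAt.comp t hζ).add (hexp.const_mul (i * δ))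
  rw [hw.deriv]
  ring

/-- Sub- and super-solutions built from the traveling-wave profile (Lemma 2):
there exist `σ, β > 0` such that for every `δ ∈ (0,Δ₁)`, `l ∈ ℝ` and `i = ±1`,
the function `w_i(t,x) = η(x − ct + il + iσδ(1 − e^{−βt})) + iδe^{−βt}`
satisfies `i·(∂_t w_i + |∂x|w_i + F'(w_i)) ≥ 0`. -/
theorem sub_super_solutions
    (ηl ηr : ℝ) (hlr : ηl < ηr)
    (F : ℝ → ℝ) (hF : ContDiff ℝ 3 F)
    (hF1 : ∃ M : ℝ, ∀ x, |deriv F x| ≤ M)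
    (hF2 : ∃ M : ℝ, ∀ x, |deriv (deriv F) x| ≤ M)
    (hF3 : ∃ M : ℝ, ∀ x, |deriv (deriv (deriv F)) x| ≤ M)
    (hFl : deriv F ηl = 0) (hFr : deriv F ηr = 0)
    (hFl2 : 0 < deriv (deriv F) ηl) (hFr2 : 0 < deriv (deriv F) ηr)
    (Δ₀ : ℝ) (hΔ₀ : 0 < Δ₀)
    (hwells : ∀ v ∈ Set.Icc (ηl - Δ₀) (ηl + Δ₀) ∪ Set.Icc (ηr - Δ₀) (ηr + Δ₀),
      0 < deriv (deriv F) v)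
    (η : ℝ → ℝ) (c : ℝ)
    (hη : ContDiff ℝ 2 η) (hηb : ∃ M : ℝ, ∀ x, |η x| ≤ M)
    (hη' : ∀ x, 0 < deriv η x)
    (hbot : Tendsto η atBot (nhds ηl)) (htop : Tendsto η atTop (nhds ηr))
    (heq : ∀ x, -halfLap η x + c * deriv η x = deriv F (η x))
    (Δ₁ : ℝ) (hΔ₁ : 0 < Δ₁) (hΔ₁₀ : Δ₁ < Δ₀) :
    ∃ σ : ℝ, 0 < σ ∧ ∃ β : ℝ, 0 < β ∧
      ∀ δ : ℝ, 0 < δ → δ < Δ₁ → ∀ l : ℝ, ∀ i : ℝ, (i = 1 ∨ i = -1) →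
        ∀ t : ℝ, 0 ≤ t → ∀ x : ℝ,
          0 ≤ i * ((deriv (fun s => η (x - c * s + i * l
                      + i * σ * δ * (1 - Real.exp (-β * s))) + i * δ * Real.exp (-β * s)) t)
            + halfLap (fun y => η (y - c * t + i * l
                      + i * σ * δ * (1 - Real.exp (-β * t))) + i * δ * Real.exp (-β * t)) x
            + deriv F (η (x - c * t + i * l
                      + i * σ * δ * (1 - Real.exp (-β * t))) + i * δ * Real.exp (-β * t))) := by
  -- Regularity consequences
  have hηd : Differentiable ℝ η := hη.differentiable two_ne_zero
  have hη'c : ContDiff ℝ 1 (deriv η) := by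
    have h : ContDiff ℝ ((1:ℕ) + 1 : ℕ) η := by exact_mod_cast hη
    have := ((contDiff_succ_iff_deriv (n := 1)).mp (by exact_mod_cast h)).2.2
    exact_mod_cast this
  have hF' : ContDiff ℝ 2 (deriv F) := by
    have h : ContDiff ℝ ((2:ℕ) + 1 : ℕ) F := by exact_mod_cast hF
    have := ((contDiff_succ_iff_deriv (n := 2)).mp (by exact_mod_cast h)).2.2
    exact_mod_cast this
  have hF'' : ContDiff ℝ 1 (deriv (deriv F)) := by
    have h : ContDiff ℝ ((1:ℕ) + 1 : ℕ) (deriv F) := by exact_mod_cast hF'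
    have := ((contDiff_succ_iff_deriv (n := 1)).mp (by exact_mod_cast h)).2.2
    exact_mod_cast this
  have hF'd : Differentiable ℝ (deriv F) := hF'.differentiable two_ne_zero
  -- Bound on F''
  obtain ⟨M, hM⟩ := hF2
  have hM0 : 0 ≤ M := le_trans (abs_nonneg _) (hM 0)
  -- minimum of F'' on the wells
  have hKcomp : IsCompact (Icc (ηl - Δ₀) (ηl + Δ₀) ∪ Icc (ηr - Δ₀) (ηr + Δ₀)) :=
    isCompact_Icc.union isCompact_Icc
  obtain ⟨v0, hv0K, hv0min'⟩ :=
    hKcomp.exists_isMinOn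
      ⟨ηl, Or.inl (mem_Icc.mpr ⟨by linarith, by linarith⟩)⟩ hF''.continuous.continuousOn
  have hv0min := isMinOn_iff.mp hv0min'
  set β := deriv (deriv F) v0 with hβdef
  have hβ : 0 < β := hwells v0 hv0K
  -- behavior near ±∞
  obtain ⟨A, hA⟩ : ∃ A, ∀ z ≤ A, |η z - ηl| < Δ₀ - Δ₁ := by
    have h := Metric.tendsto_nhds.mp hbot (Δ₀ - Δ₁) (by linarith)
    rw [eventually_atBot] at h
    obtain ⟨A, hA⟩ := h
    exact ⟨A, fun z hz => by have := hA z hz; rwa [Real.dist_eq] at this⟩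
  obtain ⟨B, hB⟩ : ∃ B, ∀ z, B ≤ z → |η z - ηr| < Δ₀ - Δ₁ := by
    have h := Metric.tendsto_nhds.mp htop (Δ₀ - Δ₁) (by linarith)
    rw [eventually_atTop] at h
    obtain ⟨B, hB⟩ := h
    exact ⟨B, fun z hz => by have := hB z hz; rwa [Real.dist_eq] at this⟩
  -- minimum of η' on the middle compact region
  obtain ⟨m, hm, hmB⟩ : ∃ m, 0 < m ∧ ∀ z ∈ Icc A B, m ≤ deriv η z := by
    rcases le_or_gt A B with h | h
    · obtain ⟨z0, hz0, hz0min⟩ :=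
        isCompact_Icc.exists_isMinOn ⟨A, mem_Icc.mpr ⟨le_refl A, h⟩⟩ hη'c.continuous.continuousOn
      exact ⟨deriv η z0, hη' z0, isMinOn_iff.mp hz0min⟩
    · exact ⟨1, one_pos, fun z hz => absurd (hz.1.trans hz.2) (not_le.mpr h)⟩
  set σ := (β + M) / (β * m) + 1 with hσdef
  have hσpos : 0 < σ := by
    have h1 : (0:ℝ) ≤ (β + M) / (β * m) := div_nonneg (by linarith) (mul_pos hβ hm).le
    rw [hσdef]; linarith
  have hσm : β + M ≤ σ * β * m := by
    have hne : β * m ≠ 0 := (mul_pos hβ hm).ne'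
    have h1 : σ * β * m = (β + M) + β * m := by
      rw [hσdef]; field_simp
    nlinarith [mul_pos hβ hm]
  -- key pointwise inequality
  have key : ∀ z ξ : ℝ, |ξ - η z| < Δ₁ → β ≤ σ * β * deriv η z + deriv (deriv F) ξ := by
    intro z ξ hξ
    have hσβ : (0:ℝ) ≤ σ * β := mul_nonneg hσpos.le hβ.le
    rcases le_or_gt z A with hzA | hzA
    · have h1 := hA z hzA
      have h3 : |ξ - ηl| < Δ₀ := by
        calc |ξ - ηl| ≤ |ξ - η z| + |η z - ηl| := abs_sub_le _ _ _
          _ < Δ₀ := by linarith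
      obtain ⟨h4, h5⟩ := abs_lt.mp h3
      have h6 := hv0min ξ (Or.inl ⟨by linarith, by linarith⟩)
      have h7 : 0 ≤ σ * β * deriv η z := mul_nonneg hσβ (hη' z).le
      linarith
    · rcases le_or_gt B z with hzB | hzB
      · have h1 := hB z hzB
        have h3 : |ξ - ηr| < Δ₀ := by
          calc |ξ - ηr| ≤ |ξ - η z| + |η z - ηr| := abs_sub_le _ _ _
            _ < Δ₀ := by linarith
        obtain ⟨h4, h5⟩ := abs_lt.mp h3
        have h6 := hv0min ξ (Or.inr ⟨by linarith, by linarith⟩)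
        have h7 : 0 ≤ σ * β * deriv η z := mul_nonneg hσβ (hη' z).le
        linarith
      · have h9 := hmB z ⟨hzA.le, hzB.le⟩
        have h10 : σ * β * m ≤ σ * β * deriv η z := mul_le_mul_of_nonneg_left h9 hσβ
        have h11 : -M ≤ deriv (deriv F) ξ := (abs_le.mp (hM ξ)).1
        linarith
  -- mean value theorem in the convenient signed form
  have mvt : ∀ a s : ℝ, 0 < s → ∀ j : ℝ, j = 1 ∨ j = -1 →
      ∃ ξ, |ξ - a| < s ∧
        j * (deriv F (a + j * s) - deriv F a) = deriv (deriv F) ξ * s := by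
    intro a s hs j hj
    rcases hj with rfl | rfl
    · obtain ⟨ξ, hmem, hsl⟩ := exists_hasDerivAt_eq_slope (deriv F) (deriv (deriv F))
        (show a < a + s by linarith) hF'.continuous.continuousOn
        (fun y _ => (hF'd y).hasDerivAt)
      have he : a + s - a = s := by ring
      rw [he, eq_div_iff hs.ne'] at hsl
      refine ⟨ξ, abs_lt.mpr ⟨by linarith [hmem.1, hmem.2], by linarith [hmem.2]⟩, ?_⟩
      rw [show a + 1 * s = a + s by ring]
      linarith [hsl]
    · obtain ⟨ξ, hmem, hsl⟩ := exists_hasDerivAt_eq_slope (deriv F) (deriv (deriv F))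
        (show a - s < a by linarith) hF'.continuous.continuousOn
        (fun y _ => (hF'd y).hasDerivAt)
      have he : a - (a - s) = s := by ring
      rw [he, eq_div_iff hs.ne'] at hsl
      refine ⟨ξ, abs_lt.mpr ⟨by linarith [hmem.1], by linarith [hmem.1, hmem.2]⟩, ?_⟩
      rw [show a + (-1) * s = a - s by ring]
      linarith [hsl]
  refine ⟨σ, hσpos, β, hβ, ?_⟩
  intro δ hδ0 hδ1 l i hi t ht x
  have hE : 0 < Real.exp (-β * t) := Real.exp_pos _
  have hE1 : Real.exp (-β * t) ≤ 1 := Real.exp_le_one_iff.mpr (by nlinarith)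
  set E := Real.exp (-β * t) with hEdef
  -- the shifted argument
  set Z := x - c * t + i * l + i * σ * δ * (1 - E) with hZdef
  -- rewrite the time derivative
  have hD := deriv_w η hηd x c i l σ δ β t
  rw [← hEdef, ← hZdef] at hD
  rw [hD]
  -- rewrite the half-Laplacian
  have hH : halfLap (fun y => η (y - c * t + i * l + i * σ * δ * (1 - E)) + i * δ * E) x
      = halfLap η Z := by
    rw [halfLap_shift η (-(c * t) + i * l + i * σ * δ * (1 - E)) (i * δ * E) x _
      (fun y => by rw [show y - c * t + i * l + i * σ * δ * (1 - E)
        = y + (-(c * t) + i * l + i * σ * δ * (1 - E)) from by ring])]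
    congr 1
    rw [hZdef]; ring
  rw [hH]
  have hhalf : halfLap η Z = c * deriv η Z - deriv F (η Z) := by
    have := heq Z; linarith
  rw [hhalf]
  -- mean value theorem
  have hδE : 0 < δ * E := mul_pos hδ0 hE
  obtain ⟨ξ, hξ1, hξ2⟩ := mvt (η Z) (δ * E) hδE i hi
  have hξ2' : i * (deriv F (η Z + i * δ * E) - deriv F (η Z))
      = deriv (deriv F) ξ * (δ * E) := by
    rw [show η Z + i * δ * E = η Z + i * (δ * E) from by ring]
    exact hξ2
  have hξΔ : |ξ - η Z| < Δ₁ := by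
    have h1 : δ * E ≤ δ := by nlinarith
    linarith
  have hkey := key Z ξ hξΔ
  have hprod : 0 ≤ δ * E * (σ * β * deriv η Z + deriv (deriv F) ξ - β) :=
    mul_nonneg hδE.le (by linarith)
  rcases hi with rfl | rfl
  · linarith [hξ2', hprod]
  · linarith [hξ2', hprod]
end
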